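/- arXiv:1806.07363 — 4 statements merged into one kernel-verified Lean document; each statement's English description precedes it below -/
import Mathlib

section
/- Assume the parameter conditions and let t = N·E[H₁₁²·1_{|H₁₁| < N^{−ν}}] / P[|H₁₁| < N^{−ρ}]. Then there exist a small constant c = c(α, ν, ρ, C₁, C₂) > 0 and a large constant C = C(α, ν, ρ, C₁, C₂) > 0 such that for all sufficiently large N: c·N^{(α−2)ν} ≤ t ≤ C·N^{(α−2)ν}. -/
open MeasureTheory ProbabilityTheory Matrix Filter
open scoped ENNReal NNReal

noncomputable section

namespace Levy

/-- The normalization `σ` from equation (2.2) of the paper. -/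
def stdSigma (α : ℝ) : ℝ := (Real.pi / (2 * Real.sin (Real.pi * α / 2) * Real.Gamma α)) ^ (α⁻¹)

/-- `Z` is a `(0, σ)` `α`-stable law and `J` is a deformation satisfying the coupling
assumptions of Definition 2.1 of the paper, with tail constants `C₁, C₂`. -/
structure DeformedStable {Ω : Type} [MeasureSpace Ω]
    (α σ C₁ C₂ : ℝ) (Z J : Ω → ℝ) : Prop where
  measZ : Measurable Z
  measJ : Measurable J
  charZ : ∀ t : ℝ,
    (∫ ω, Complex.exp (Complex.I * ((t * Z ω : ℝ) : ℂ))) =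
      Complex.exp (((-(σ ^ α * |t| ^ α) : ℝ) : ℂ))
  symmJ : Measure.map J ℙ = Measure.map (fun ω => -J ω) ℙ
  symmZJ : Measure.map (fun ω => Z ω + J ω) ℙ = Measure.map (fun ω => -(Z ω + J ω)) ℙ
  sqJ : Integrable (fun ω => (J ω) ^ 2) ℙ
  tail_lower : ∀ t : ℝ, 0 ≤ t →
    ENNReal.ofReal (C₁ / (t + 1) ^ α) ≤ ℙ {ω | t ≤ |Z ω + J ω|}
  tail_upper : ∀ t : ℝ, 0 ≤ t →
    ℙ {ω | t ≤ |Z ω + J ω|} ≤ ENNReal.ofReal (C₂ / (t + 1) ^ α)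

/-- `H` is an `N × N` `α`-Lévy matrix built from the deformed stable law `𝔷 = Z + J`. -/
structure IsLevyMatrix {Ω : Type} [MeasureSpace Ω] (α : ℝ) (Z J : Ω → ℝ)
    (N : ℕ) (H : Fin N → Fin N → Ω → ℝ) : Prop where
  symm : ∀ i j, H i j = H j i
  meas : ∀ i j, Measurable (H i j)
  indep : iIndepFun
    (fun p : {p : Fin N × Fin N // p.1 ≤ p.2} => H p.1.1 p.1.2) ℙ
  law : ∀ i j, Measure.map (H i j) ℙ =
    Measure.map (fun ω => (N : ℝ) ^ (-α⁻¹) * (Z ω + J ω)) ℙ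

/-- The resolvent `(M - z)⁻¹` of a real matrix, viewed as a complex matrix. -/
def resolv {N : ℕ} (M : Matrix (Fin N) (Fin N) ℝ) (z : ℂ) : Matrix (Fin N) (Fin N) ℂ :=
  (M.map (fun x : ℝ => (x : ℂ)) - z • (1 : Matrix (Fin N) (Fin N) ℂ))⁻¹

/-- The Stieltjes transform `m_N(z) = N⁻¹ Tr (M - z)⁻¹`. -/
def stieltjes {N : ℕ} (M : Matrix (Fin N) (Fin N) ℝ) (z : ℂ) : ℂ :=
  (N : ℂ)⁻¹ * (resolv M z).trace

/-- The `b`-removed matrix `X`, coupled to `H` by `X_ij = H_ij · 1_{|H_ij| > N^(b - 1/α)}`. -/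
def removal {Ω : Type} (α b : ℝ) (N : ℕ) (H : Fin N → Fin N → Ω → ℝ) (ω : Ω) :
    Matrix (Fin N) (Fin N) ℝ :=
  Matrix.of fun i j => if (N : ℝ) ^ (b - α⁻¹) < |H i j ω| then H i j ω else 0

/-- Setting the `i`-th row and column of a matrix to zero. -/
def minorMat {N : ℕ} (M : Matrix (Fin N) (Fin N) ℝ) (i : Fin N) :
    Matrix (Fin N) (Fin N) ℝ :=
  Matrix.of fun j k => if j = i ∨ k = i then 0 else M j k

/-- The function `φ_{α,z}` from equation (2.3) of the paper. -/
def phiFn (α : ℝ) (z x : ℂ) : ℂ :=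
  ((Real.Gamma (α / 2) : ℝ) : ℂ)⁻¹ *
    ∫ t in Set.Ioi (0 : ℝ),
      ((t ^ (α / 2 - 1) : ℝ) : ℂ) * Complex.exp (Complex.I * (t : ℂ) * z) *
        Complex.exp (-(((Real.Gamma (1 - α / 2) : ℝ) : ℂ) * ((t ^ (α / 2) : ℝ) : ℂ) * x))

/-- The function `ψ_{α,z}` from equation (2.3) of the paper. -/
def psiFn (α : ℝ) (z x : ℂ) : ℂ :=
  ∫ t in Set.Ioi (0 : ℝ),
    Complex.exp (Complex.I * (t : ℂ) * z) *
      Complex.exp (-(((Real.Gamma (1 - α / 2) : ℝ) : ℂ) * ((t ^ (α / 2) : ℝ) : ℂ) * x))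

/-- `y` is the fixed-point function `z ↦ y(z)` with `Re y(z) > 0` and `y(z) = φ_{α,z}(y(z))`. -/
def IsStieltjesFP (α : ℝ) (y : ℂ → ℂ) : Prop :=
  ∀ z : ℂ, 0 < z.im → 0 < (y z).re ∧ y z = phiFn α z (y z)

/-- The Stieltjes transform `m_α(z) = i ψ_{α,z}(y(z))` of the limiting measure `μ_α`. -/
def mAlpha (α : ℝ) (y : ℂ → ℂ) (z : ℂ) : ℂ := Complex.I * psiFn α z (y z)

/-- The parameter conditions (3.1) of the paper. -/
structure ParamConds (α b ν ρ : ℝ) : Prop where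
  hα0 : 0 < α
  hα2 : α < 2
  hb : 0 < b
  hνdef : ν = α⁻¹ - b
  hν0 : 0 < ν
  hρ0 : 0 < ρ
  hρν : ρ < ν
  hνhalf : ν < 1 / 2
  hνlow : 1 / (4 - α) < ν
  hνhigh : ν < 1 / (4 - 2 * α)
  hαρ : α * ρ < (2 - α) * ν

/-- `W` is an `N × N` GOE matrix. -/
structure IsGOE {Ω : Type} [MeasureSpace Ω] (N : ℕ) (W : Fin N → Fin N → Ω → ℝ) : Prop where
  symm : ∀ i j, W i j = W j i
  meas : ∀ i j, Measurable (W i j)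
  indep : iIndepFun
    (fun p : {p : Fin N × Fin N // p.1 ≤ p.2} => W p.1.1 p.1.2) ℙ
  law : ∀ i j, Measure.map (W i j) ℙ = gaussianReal 0 (if i = j then 2 / N else 1 / N)

/-- The parameter `t = N E[H₁₁² 1_{|H₁₁| < N^{-ν}}] / P[|H₁₁| < N^{-ρ}]` from (3.2). -/
def tParam (α ν ρ : ℝ) {Ω : Type} [MeasureSpace Ω] (Z J : Ω → ℝ) (N : ℕ) : ℝ :=
  (N : ℝ) *
      (∫ ω in {ω | |(N : ℝ) ^ (-α⁻¹) * (Z ω + J ω)| < (N : ℝ) ^ (-ν)},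
        ((N : ℝ) ^ (-α⁻¹) * (Z ω + J ω)) ^ 2) /
    (ℙ {ω | |(N : ℝ) ^ (-α⁻¹) * (Z ω + J ω)| < (N : ℝ) ^ (-ρ)}).toReal

/-- The three-level decomposition of Definitions 3.10 and 3.11 of the paper:
`a, b, c` are entries conditioned to be small/medium/large, `ψ, χ` are the Bernoulli
labels, and `W` is an independent GOE matrix. -/
structure Decomp {Ω : Type} [MeasureSpace Ω] (α ν ρ : ℝ) (Z J : Ω → ℝ) (N : ℕ)
    (a b c ψ χ W : Fin N → Fin N → Ω → ℝ) : Prop where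
  symm_a : ∀ i j, a i j = a j i
  symm_b : ∀ i j, b i j = b j i
  symm_c : ∀ i j, c i j = c j i
  symm_ψ : ∀ i j, ψ i j = ψ j i
  symm_χ : ∀ i j, χ i j = χ j i
  symm_W : ∀ i j, W i j = W j i
  meas : ∀ i j, Measurable (a i j) ∧ Measurable (b i j) ∧ Measurable (c i j) ∧
    Measurable (ψ i j) ∧ Measurable (χ i j) ∧ Measurable (W i j)
  indep : iIndepFun
    (fun q : {p : Fin N × Fin N // p.1 ≤ p.2} × Fin 6 =>
      ![a q.1.1.1 q.1.1.2, b q.1.1.1 q.1.1.2, c q.1.1.1 q.1.1.2,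
        ψ q.1.1.1 q.1.1.2, χ q.1.1.1 q.1.1.2, W q.1.1.1 q.1.1.2] q.2) ℙ
  law_a : ∀ i j, Measure.map (a i j) ℙ =
    ProbabilityTheory.cond (Measure.map (fun ω => (N : ℝ) ^ (-α⁻¹) * (Z ω + J ω)) ℙ)
      {x : ℝ | |x| < (N : ℝ) ^ (-ν)}
  law_b : ∀ i j, Measure.map (b i j) ℙ =
    ProbabilityTheory.cond (Measure.map (fun ω => (N : ℝ) ^ (-α⁻¹) * (Z ω + J ω)) ℙ)
      {x : ℝ | (N : ℝ) ^ (-ν) ≤ |x| ∧ |x| < (N : ℝ) ^ (-ρ)}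
  law_c : ∀ i j, Measure.map (c i j) ℙ =
    ProbabilityTheory.cond (Measure.map (fun ω => (N : ℝ) ^ (-α⁻¹) * (Z ω + J ω)) ℙ)
      {x : ℝ | (N : ℝ) ^ (-ρ) ≤ |x|}
  val_ψ : ∀ i j ω, ψ i j ω = 0 ∨ ψ i j ω = 1
  val_χ : ∀ i j ω, χ i j ω = 0 ∨ χ i j ω = 1
  law_ψ : ∀ i j, ℙ {ω | ψ i j ω = 1} =
    (Measure.map (fun ω => (N : ℝ) ^ (-α⁻¹) * (Z ω + J ω)) ℙ) {x : ℝ | (N : ℝ) ^ (-ρ) ≤ |x|}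
  law_χ : ∀ i j, ℙ {ω | χ i j ω = 1} =
    (ProbabilityTheory.cond (Measure.map (fun ω => (N : ℝ) ^ (-α⁻¹) * (Z ω + J ω)) ℙ)
        {x : ℝ | |x| < (N : ℝ) ^ (-ρ)})
      {x : ℝ | (N : ℝ) ^ (-ν) ≤ |x|}
  law_W : ∀ i j, Measure.map (W i j) ℙ = gaussianReal 0 (if i = j then 2 / N else 1 / N)

/-- The interpolating matrix `H^γ = γ A + X + (1 - γ²)^{1/2} t^{1/2} W`. -/
def HgammaMat {Ω : Type} [MeasureSpace Ω] (α ν ρ : ℝ) (Z J : Ω → ℝ) (N : ℕ)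
    (a b c ψ χ W : Fin N → Fin N → Ω → ℝ) (γ : ℝ) (ω : Ω) : Matrix (Fin N) (Fin N) ℝ :=
  Matrix.of fun i j =>
    γ * ((1 - ψ i j ω) * (1 - χ i j ω) * a i j ω) +
      ((1 - ψ i j ω) * χ i j ω * b i j ω + ψ i j ω * c i j ω) +
        Real.sqrt (1 - γ ^ 2) * Real.sqrt (tParam α ν ρ Z J N) * W i j ω

/-- The resolvent `G^γ(z)` of the interpolating matrix `H^γ`. -/
def Ggamma {Ω : Type} [MeasureSpace Ω] (α ν ρ : ℝ) (Z J : Ω → ℝ) (N : ℕ)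
    (a b c ψ χ W : Fin N → Fin N → Ω → ℝ) (γ : ℝ) (z : ℂ) (ω : Ω) :
    Matrix (Fin N) (Fin N) ℂ :=
  resolv (HgammaMat α ν ρ Z J N a b c ψ χ W γ ω) z

/-- The partial derivative of `F : ℝ^m → ℝ` in the `j`-th coordinate direction. -/
def pderiv {m : ℕ} (j : Fin m) (F : (Fin m → ℝ) → ℝ) : (Fin m → ℝ) → ℝ :=
  fun x => fderiv ℝ F x (Pi.single j 1)

/-- Iterated coordinate partial derivatives of `F : ℝ^m → ℝ` along a list of directions;
this encodes the multi-index derivatives `F^{(μ)}`. -/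
def multiDeriv {m : ℕ} (l : List (Fin m)) (F : (Fin m → ℝ) → ℝ) : (Fin m → ℝ) → ℝ :=
  l.foldr pderiv F

/-- The spectral domain `D(E₀, r, η₀, γ)` from (3.4). -/
def specD (E₀ r η₀ γ : ℝ) : Set ℂ :=
  {z : ℂ | z.re ∈ Set.Icc (E₀ - r) (E₀ + r) ∧ η₀ ≤ z.im ∧ z.im ≤ γ}

end Levy

namespace LevyAux

open MeasureTheory ProbabilityTheory Set
open scoped ENNReal NNReal

/-- Truncated second moment bounds from two-sided power-law tail bounds. -/
lemma trunc_bounds {Ω : Type} [MeasureSpace Ω] [IsProbabilityMeasure (ℙ : Measure Ω)]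
    (X : Ω → ℝ) (hX : Measurable X) (α C₁ C₂ : ℝ)
    (hα0 : 0 < α) (hα2 : α < 2) (hC₁ : 0 < C₁) (hC₂ : 0 < C₂)
    (hlow : ∀ t : ℝ, 0 ≤ t → ENNReal.ofReal (C₁ / (t + 1) ^ α) ≤ ℙ {ω | t ≤ |X ω|})
    (hup : ∀ t : ℝ, 0 ≤ t → ℙ {ω | t ≤ |X ω|} ≤ ENNReal.ofReal (C₂ / (t + 1) ^ α))
    (K : ℝ) (hK : 2 * (2 * C₂ / C₁ + 1) ^ α⁻¹ ≤ K) :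
    C₁ * (2 * (2 * C₂ / C₁ + 1) ^ α⁻¹) ^ (α - 2) / 2 ^ (α + 1) * K ^ (2 - α) ≤
      (∫ ω in {ω | |X ω| < K}, (X ω) ^ 2) ∧
    (∫ ω in {ω | |X ω| < K}, (X ω) ^ 2) ≤ 2 * C₂ / (2 - α) * K ^ (2 - α) := by
  set M : ℝ := 2 * (2 * C₂ / C₁ + 1) ^ α⁻¹ with hMdef
  have hB1 : (1 : ℝ) ≤ (2 * C₂ / C₁ + 1) ^ α⁻¹ :=
    Real.one_le_rpow (le_add_of_nonneg_left (by positivity)) (by positivity)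
  have hM2 : (2 : ℝ) ≤ M := by nlinarith
  have hM0 : (0 : ℝ) < M := by linarith
  have hK0 : (0 : ℝ) < K := by linarith
  have hK1 : (1 : ℝ) ≤ K := by linarith
  set S : Set Ω := {ω | |X ω| < K} with hSdef
  have hSm : MeasurableSet S := measurableSet_lt hX.abs measurable_const
  set f : Ω → ℝ := S.indicator fun ω => |X ω| with hfdef
  have hfnn : ∀ ω, 0 ≤ f ω := fun ω => Set.indicator_nonneg (fun ω _ => abs_nonneg _) ω
  have hfm : Measurable f := hX.abs.indicator hSm
  have hfltK : ∀ ω, f ω < K := by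
    intro ω
    by_cases h : ω ∈ S
    · rw [hfdef, Set.indicator_of_mem h]; exact h
    · rw [hfdef, Set.indicator_of_notMem h]; exact hK0
  -- the layer cake formula
  have key := lintegral_comp_eq_lintegral_meas_lt_mul (f := f) (g := fun t => 2 * t) ℙ
    (Filter.Eventually.of_forall hfnn) hfm.aemeasurable
    (fun t _ => (continuous_const.mul continuous_id).intervalIntegrable 0 t)
    ((ae_restrict_iff' measurableSet_Ioi).2 (Filter.Eventually.of_forall fun t ht => by
      simp only [Set.mem_Ioi] at ht; linarith))
  have hsq : ∀ x : ℝ, (∫ t in (0 : ℝ)..x, 2 * t) = x ^ 2 := by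
    intro x
    rw [intervalIntegral.integral_const_mul, integral_id]
    ring
  set T : ℝ≥0∞ := ∫⁻ t in Set.Ioi (0:ℝ), ℙ {a | t < f a} * ENNReal.ofReal (2 * t) with hTdef
  have h2 : (∫⁻ ω, ENNReal.ofReal (f ω ^ 2) ∂ℙ) = T := by
    rw [← key]
    exact lintegral_congr fun ω => by rw [hsq]
  have h1 : (∫ ω in S, (X ω) ^ 2) = T.toReal := by
    rw [← h2, integral_eq_lintegral_of_nonneg_ae (Filter.Eventually.of_forall fun ω => sq_nonneg _)
      ((hX.pow_const 2).aestronglyMeasurable), ← lintegral_indicator hSm]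
    congr 1
    apply lintegral_congr
    intro ω
    by_cases h : ω ∈ S
    · rw [Set.indicator_of_mem h, hfdef, Set.indicator_of_mem h, sq_abs]
    · rw [Set.indicator_of_notMem h, hfdef, Set.indicator_of_notMem h]
      norm_num
  -- upper bound for T
  have hIoc : IntegrableOn (fun t : ℝ => 2 * C₂ * t ^ (1 - α)) (Set.Ioc 0 K) := by
    have := (intervalIntegral.intervalIntegrable_rpow' (a := 0) (b := K)
      (show (-1 : ℝ) < 1 - α by linarith)).const_mul (2 * C₂)
    exact (intervalIntegrable_iff_integrableOn_Ioc_of_le hK0.le).1 this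
  have hval : (∫ t in Set.Ioc (0:ℝ) K, 2 * C₂ * t ^ (1 - α)) =
      2 * C₂ / (2 - α) * K ^ (2 - α) := by
    rw [← intervalIntegral.integral_of_le hK0.le, intervalIntegral.integral_const_mul,
      integral_rpow (Or.inl (by linarith : (-1:ℝ) < 1 - α))]
    have h0 : (0 : ℝ) ^ (1 - α + 1) = 0 := Real.zero_rpow (by linarith)
    rw [h0]
    have he : (1 : ℝ) - α + 1 = 2 - α := by ring
    rw [he]
    ring
  have hTup : T ≤ ENNReal.ofReal (2 * C₂ / (2 - α) * K ^ (2 - α)) := by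
    calc T ≤ ∫⁻ t in Set.Ioi (0:ℝ),
        (Set.Ioc (0:ℝ) K).indicator (fun t => ENNReal.ofReal (2 * C₂ * t ^ (1 - α))) t := by
          apply lintegral_mono
          intro t
          dsimp only
          rcases le_or_gt t 0 with ht | ht
          · have : ENNReal.ofReal (2 * t) = 0 := by
              rw [ENNReal.ofReal_eq_zero]; linarith
            rw [this, mul_zero]; exact zero_le
          rcases le_or_gt t K with htK | htK
          · rw [Set.indicator_of_mem (Set.mem_Ioc.2 ⟨ht, htK⟩)]
            have hsub : {a | t < f a} ⊆ {a | t ≤ |X a|} := by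
              intro a ha
              simp only [Set.mem_setOf_eq] at ha ⊢
              by_cases hmem : a ∈ S
              · rw [hfdef, Set.indicator_of_mem hmem] at ha; exact ha.le
              · rw [hfdef, Set.indicator_of_notMem hmem] at ha; linarith
            calc ℙ {a | t < f a} * ENNReal.ofReal (2 * t)
                ≤ ENNReal.ofReal (C₂ / (t + 1) ^ α) * ENNReal.ofReal (2 * t) :=
                  mul_le_mul_left ((measure_mono hsub).trans (hup t ht.le)) _
              _ = ENNReal.ofReal (C₂ / (t + 1) ^ α * (2 * t)) :=
                  (ENNReal.ofReal_mul (by positivity)).symm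
              _ ≤ ENNReal.ofReal (2 * C₂ * t ^ (1 - α)) := by
                  apply ENNReal.ofReal_le_ofReal
                  have h1α : t ^ (1 - α) = t / t ^ α := by
                    rw [Real.rpow_sub ht, Real.rpow_one]
                  rw [h1α]
                  have htα : (0:ℝ) < t ^ α := Real.rpow_pos_of_pos ht _
                  have htt : t ^ α ≤ (t + 1) ^ α :=
                    Real.rpow_le_rpow ht.le (by linarith) hα0.le
                  have h2' : C₂ / (t + 1) ^ α ≤ C₂ / t ^ α := by
                    apply div_le_div_of_nonneg_left hC₂.le htα htt
                  calc C₂ / (t + 1) ^ α * (2 * t) ≤ C₂ / t ^ α * (2 * t) :=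
                        mul_le_mul_of_nonneg_right h2' (by linarith)
                    _ = 2 * C₂ * (t / t ^ α) := by ring
          · have hempty : {a | t < f a} = ∅ := by
              ext a
              simp only [Set.mem_setOf_eq, Set.mem_empty_iff_false, iff_false, not_lt]
              exact (hfltK a).le.trans htK.le
            rw [hempty, measure_empty, zero_mul]
            exact zero_le
      _ ≤ ∫⁻ t, (Set.Ioc (0:ℝ) K).indicator
            (fun t => ENNReal.ofReal (2 * C₂ * t ^ (1 - α))) t :=
          setLIntegral_le_lintegral _ _
      _ = ∫⁻ t in Set.Ioc (0:ℝ) K, ENNReal.ofReal (2 * C₂ * t ^ (1 - α)) :=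
          lintegral_indicator measurableSet_Ioc _
      _ = ENNReal.ofReal (∫ t in Set.Ioc (0:ℝ) K, 2 * C₂ * t ^ (1 - α)) :=
          (ofReal_integral_eq_lintegral_ofReal hIoc
            ((ae_restrict_iff' measurableSet_Ioc).2 (Filter.Eventually.of_forall fun t ht =>
              mul_nonneg (by positivity) (Real.rpow_nonneg ht.1.le _)))).symm
      _ = ENNReal.ofReal (2 * C₂ / (2 - α) * K ^ (2 - α)) := by rw [hval]
  have hTfin : T ≠ ⊤ := ne_top_of_le_ne_top ENNReal.ofReal_ne_top hTup
  have hupper : (∫ ω in S, (X ω) ^ 2) ≤ 2 * C₂ / (2 - α) * K ^ (2 - α) := by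
    rw [h1]
    exact ENNReal.toReal_le_of_le_ofReal
      (mul_nonneg (div_nonneg (by linarith) (by linarith)) (Real.rpow_nonneg hK0.le _)) hTup
  -- lower bound
  set k : ℝ := K / M with hkdef
  have hk0 : (0 : ℝ) < k := div_pos hK0 hM0
  have hk1 : (1 : ℝ) ≤ k := (one_le_div hM0).2 hK
  have hkK : k ≤ K := by
    rw [hkdef, div_le_iff₀ hM0]
    nlinarith
  set A₁ : Set Ω := {ω | k ≤ |X ω|} with hA₁def
  set A₂ : Set Ω := {ω | K ≤ |X ω|} with hA₂def
  have hA₂m : MeasurableSet A₂ := measurableSet_le measurable_const hX.abs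
  have hsub21 : A₂ ⊆ A₁ := fun ω h => le_trans hkK h
  have hann : ℙ (A₁ \ A₂) = ℙ A₁ - ℙ A₂ :=
    measure_diff hsub21 hA₂m.nullMeasurableSet (measure_ne_top ℙ _)
  -- real arithmetic
  have hKα : (0:ℝ) < K ^ α := Real.rpow_pos_of_pos hK0 _
  have hMα0 : (0:ℝ) < M ^ α := Real.rpow_pos_of_pos hM0 _
  have hMα : M ^ α = 2 ^ α * (2 * C₂ / C₁ + 1) := by
    rw [hMdef, Real.mul_rpow (by norm_num) (by positivity),
      ← Real.rpow_mul (by positivity), inv_mul_cancel₀ hα0.ne', Real.rpow_one]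
  have hkα : (k + 1) ^ α ≤ 2 ^ α * K ^ α / M ^ α := by
    calc (k + 1) ^ α ≤ (2 * k) ^ α :=
          Real.rpow_le_rpow (by positivity) (by linarith) hα0.le
      _ = 2 ^ α * k ^ α := Real.mul_rpow (by norm_num) hk0.le
      _ = 2 ^ α * (K ^ α / M ^ α) := by
          rw [hkdef, Real.div_rpow hK0.le hM0.le]
      _ = 2 ^ α * K ^ α / M ^ α := by ring
  have ha : C₁ * M ^ α / (2 ^ α * K ^ α) ≤ C₁ / (k + 1) ^ α := by
    rw [div_le_div_iff₀ (by positivity) (by positivity)]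
    calc C₁ * M ^ α * (k + 1) ^ α ≤ C₁ * M ^ α * (2 ^ α * K ^ α / M ^ α) := by
          apply mul_le_mul_of_nonneg_left hkα (by positivity)
      _ = C₁ * (2 ^ α * K ^ α) := by field_simp
  have hb : C₂ / (K + 1) ^ α ≤ C₂ / K ^ α := by
    apply div_le_div_of_nonneg_left hC₂.le hKα
    exact Real.rpow_le_rpow hK0.le (by linarith) hα0.le
  have h2α : (2:ℝ) ^ (α + 1) = 2 ^ α * 2 := by
    rw [Real.rpow_add (by norm_num : (0:ℝ) < 2), Real.rpow_one]
  have h2α0 : (0:ℝ) < 2 ^ α := Real.rpow_pos_of_pos (by norm_num) _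
  have hCM : C₂ ≤ C₁ * M ^ α / 2 ^ (α + 1) := by
    have : C₁ * M ^ α / 2 ^ (α + 1) = C₂ + C₁ / 2 := by
      rw [hMα, h2α]; field_simp
    rw [this]; linarith
  have hd : C₁ * M ^ α / (2 ^ (α + 1) * K ^ α) ≤ C₁ / (k + 1) ^ α - C₂ / (K + 1) ^ α := by
    have e1 : C₁ * M ^ α / (2 ^ α * K ^ α) - C₁ * M ^ α / (2 ^ (α + 1) * K ^ α) =
        C₁ * M ^ α / (2 ^ (α + 1) * K ^ α) := by
      rw [h2α]; field_simp; ring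
    have e2 : C₂ / K ^ α ≤ C₁ * M ^ α / (2 ^ (α + 1) * K ^ α) := by
      rw [show C₁ * M ^ α / (2 ^ (α + 1) * K ^ α) = (C₁ * M ^ α / 2 ^ (α + 1)) / K ^ α by
        rw [div_div]]
      gcongr
    linarith
  have hdpos : (0:ℝ) < C₁ * M ^ α / (2 ^ (α + 1) * K ^ α) := by positivity
  set d : ℝ := C₁ / (k + 1) ^ α - C₂ / (K + 1) ^ α with hddef
  have hd0 : 0 ≤ d := le_trans hdpos.le hd
  -- measure lower bound on the annulus
  have hannlb : ENNReal.ofReal d ≤ ℙ (A₁ \ A₂) := by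
    rw [hann, hddef, ENNReal.ofReal_sub _ (by positivity)]
    exact tsub_le_tsub (hlow k hk0.le) (hup K hK0.le)
  -- lower bound on T
  have hannf : ∀ t ∈ Set.Ioo (0:ℝ) k, (A₁ \ A₂) ⊆ {a | t < f a} := by
    intro t ht a ha
    obtain ⟨h1a, h2a⟩ := ha
    have h1a' : k ≤ |X a| := h1a
    have h2a' : ¬ K ≤ |X a| := h2a
    have hmem : a ∈ S := show |X a| < K from lt_of_not_ge h2a'
    show t < f a
    rw [hfdef, Set.indicator_of_mem hmem]
    exact lt_of_lt_of_le ht.2 h1a'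
  have hmono : Measurable fun t : ℝ => ℙ {a | t < f a} := by
    have : Antitone fun t : ℝ => ℙ {a | t < f a} := by
      intro u v huv
      exact measure_mono fun a ha => lt_of_le_of_lt huv ha
    exact this.measurable
  have hIook : (∫⁻ t in Set.Ioo (0:ℝ) k, ENNReal.ofReal (2 * t)) =
      ENNReal.ofReal (k ^ 2) := by
    rw [← ofReal_integral_eq_lintegral_ofReal]
    · congr 1
      rw [← integral_Ioc_eq_integral_Ioo, ← intervalIntegral.integral_of_le hk0.le, hsq]
    · exact ((continuous_const.mul continuous_id).integrableOn_Ioc).mono_set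
        Set.Ioo_subset_Ioc_self
    · exact (ae_restrict_iff' measurableSet_Ioo).2
        (Filter.Eventually.of_forall fun t ht => show (0:ℝ) ≤ 2 * t by linarith [ht.1])
  have hTlow : ENNReal.ofReal (d * k ^ 2) ≤ T := by
    calc ENNReal.ofReal (d * k ^ 2) = ENNReal.ofReal d * ENNReal.ofReal (k ^ 2) :=
          ENNReal.ofReal_mul hd0
      _ ≤ ℙ (A₁ \ A₂) * ENNReal.ofReal (k ^ 2) := mul_le_mul_left hannlb _
      _ = ∫⁻ t in Set.Ioo (0:ℝ) k, ℙ (A₁ \ A₂) * ENNReal.ofReal (2 * t) := by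
          rw [lintegral_const_mul _ (show Measurable fun t : ℝ => ENNReal.ofReal (2 * t) by fun_prop), hIook]
      _ ≤ ∫⁻ t in Set.Ioo (0:ℝ) k, ℙ {a | t < f a} * ENNReal.ofReal (2 * t) := by
          apply setLIntegral_mono (hmono.mul (show Measurable fun t : ℝ => ENNReal.ofReal (2 * t) by fun_prop))
          intro t ht
          exact mul_le_mul_left (measure_mono (hannf t ht)) _
      _ ≤ T := by
          rw [hTdef]
          exact lintegral_mono_set Set.Ioo_subset_Ioi_self
  have hlower : d * k ^ 2 ≤ ∫ ω in S, (X ω) ^ 2 := by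
    rw [h1, ← ENNReal.toReal_ofReal (by positivity : (0:ℝ) ≤ d * k ^ 2)]
    exact ENNReal.toReal_mono hTfin hTlow
  -- final real computation
  have hfin : C₁ * M ^ (α - 2) / 2 ^ (α + 1) * K ^ (2 - α) ≤ d * k ^ 2 := by
    have hk2 : k ^ 2 = K ^ 2 / M ^ 2 := by rw [hkdef, div_pow]
    have heq : C₁ * M ^ α / (2 ^ (α + 1) * K ^ α) * (K ^ 2 / M ^ 2) =
        C₁ * M ^ (α - 2) / 2 ^ (α + 1) * K ^ (2 - α) := by
      rw [Real.rpow_sub hM0, Real.rpow_sub hK0, Real.rpow_two, Real.rpow_two]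
      have h2α1 : (0:ℝ) < 2 ^ (α + 1) := Real.rpow_pos_of_pos (by norm_num) _
      field_simp
    calc C₁ * M ^ (α - 2) / 2 ^ (α + 1) * K ^ (2 - α)
        = C₁ * M ^ α / (2 ^ (α + 1) * K ^ α) * (K ^ 2 / M ^ 2) := heq.symm
      _ ≤ d * (K ^ 2 / M ^ 2) := by
          apply mul_le_mul_of_nonneg_right hd (by positivity)
      _ = d * k ^ 2 := by rw [hk2]
  exact ⟨le_trans hfin hlower, hupper⟩

end LevyAux


/-- Lemma 3.8 of the paper: the Gaussian variance parameter `t` satisfies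
`t ≍ N^{(α-2)ν}`. -/
theorem statement_8
    (α b ν ρ : ℝ) (hpc : Levy.ParamConds α b ν ρ)
    {Ω : Type} [MeasureSpace Ω] [IsProbabilityMeasure (ℙ : Measure Ω)]
    (Z J : Ω → ℝ) (C₁ C₂ : ℝ) (hC₁ : 0 < C₁) (hC₂ : 0 < C₂)
    (hZJ : Levy.DeformedStable α (Levy.stdSigma α) C₁ C₂ Z J) :
    ∃ c C : ℝ, 0 < c ∧ 0 < C ∧ ∃ N₀ : ℕ, ∀ N : ℕ, N₀ ≤ N →
      c * (N : ℝ) ^ ((α - 2) * ν) ≤ Levy.tParam α ν ρ Z J N ∧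
      Levy.tParam α ν ρ Z J N ≤ C * (N : ℝ) ^ ((α - 2) * ν) := by
  classical
  obtain ⟨hα0, hα2, hb, hνdef, hν0, hρ0, hρν, hνhalf, hνlow, hνhigh, hαρ⟩ := hpc
  have hX : Measurable fun ω => Z ω + J ω := hZJ.measZ.add hZJ.measJ
  set M : ℝ := 2 * (2 * C₂ / C₁ + 1) ^ α⁻¹ with hMdef
  have hB1 : (1 : ℝ) ≤ (2 * C₂ / C₁ + 1) ^ α⁻¹ :=
    Real.one_le_rpow (le_add_of_nonneg_left (by positivity)) (by positivity)
  have hM0 : (0 : ℝ) < M := by nlinarith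
  set clow : ℝ := C₁ * M ^ (α - 2) / 2 ^ (α + 1) with hclowdef
  set Cup : ℝ := 2 * C₂ / (2 - α) with hCupdef
  have hclow0 : 0 < clow :=
    div_pos (mul_pos hC₁ (Real.rpow_pos_of_pos hM0 _)) (Real.rpow_pos_of_pos two_pos _)
  have hCup0 : 0 < Cup := div_pos (by linarith) (by linarith)
  have hbν : α⁻¹ - ν = b := by rw [hνdef]; ring
  have hbpos : 0 < α⁻¹ - ν := by rw [hbν]; exact hb
  have hρα : 0 < α⁻¹ - ρ := by
    have : ν < α⁻¹ := by rw [hνdef]; linarith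
    linarith
  have h1 : Filter.Tendsto (fun N : ℕ => (N : ℝ) ^ (α⁻¹ - ν)) Filter.atTop Filter.atTop :=
    (tendsto_rpow_atTop hbpos).comp tendsto_natCast_atTop_atTop
  have h2 : Filter.Tendsto (fun N : ℕ => (N : ℝ) ^ ((α⁻¹ - ρ) * α)) Filter.atTop Filter.atTop :=
    (tendsto_rpow_atTop (mul_pos hρα hα0)).comp tendsto_natCast_atTop_atTop
  have hev : ∀ᶠ N : ℕ in Filter.atTop,
      (M ≤ (N : ℝ) ^ (α⁻¹ - ν) ∧ 2 * C₂ ≤ (N : ℝ) ^ ((α⁻¹ - ρ) * α)) ∧ 1 ≤ N :=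
    ((h1.eventually_ge_atTop M).and (h2.eventually_ge_atTop (2 * C₂))).and
      (Filter.eventually_ge_atTop 1)
  obtain ⟨N₀, hN₀⟩ := Filter.eventually_atTop.1 hev
  refine ⟨clow, 2 * Cup, hclow0, by linarith, N₀, fun N hN => ?_⟩
  obtain ⟨⟨hKge, hLge⟩, hN1⟩ := hN₀ N hN
  have hNpos : (0 : ℝ) < N := by exact_mod_cast Nat.lt_of_lt_of_le Nat.zero_lt_one hN1
  set K : ℝ := (N : ℝ) ^ (α⁻¹ - ν) with hKdef
  set L : ℝ := (N : ℝ) ^ (α⁻¹ - ρ) with hLdef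
  have hK0 : 0 < K := Real.rpow_pos_of_pos hNpos _
  have hL0 : 0 < L := Real.rpow_pos_of_pos hNpos _
  have hc0 : (0 : ℝ) < (N : ℝ) ^ (-α⁻¹) := Real.rpow_pos_of_pos hNpos _
  -- identify the truncation sets
  have hcK : (N : ℝ) ^ (-α⁻¹) * K = (N : ℝ) ^ (-ν) := by
    rw [hKdef, ← Real.rpow_add hNpos]; congr 1; ring
  have hcL : (N : ℝ) ^ (-α⁻¹) * L = (N : ℝ) ^ (-ρ) := by
    rw [hLdef, ← Real.rpow_add hNpos]; congr 1; ring
  have hSeq : {ω : Ω | |(N : ℝ) ^ (-α⁻¹) * (Z ω + J ω)| < (N : ℝ) ^ (-ν)} =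
      {ω : Ω | |Z ω + J ω| < K} := by
    ext ω
    rw [Set.mem_setOf_eq, Set.mem_setOf_eq, abs_mul, abs_of_pos hc0, ← hcK,
      mul_lt_mul_iff_right₀ hc0]
  have hDeq : {ω : Ω | |(N : ℝ) ^ (-α⁻¹) * (Z ω + J ω)| < (N : ℝ) ^ (-ρ)} =
      {ω : Ω | |Z ω + J ω| < L} := by
    ext ω
    rw [Set.mem_setOf_eq, Set.mem_setOf_eq, abs_mul, abs_of_pos hc0, ← hcL,
      mul_lt_mul_iff_right₀ hc0]
  -- truncated second moment bounds
  obtain ⟨hlowI, hupI⟩ := LevyAux.trunc_bounds (fun ω => Z ω + J ω) hX α C₁ C₂ hα0 hα2 hC₁ hC₂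
    hZJ.tail_lower hZJ.tail_upper K hKge
  set I : ℝ := ∫ ω in {ω : Ω | |Z ω + J ω| < K}, (Z ω + J ω) ^ 2 with hIdef
  -- denominator bounds
  set D : ℝ := (ℙ {ω : Ω | |Z ω + J ω| < L}).toReal with hDdef
  have hLmeas : MeasurableSet {ω : Ω | L ≤ |Z ω + J ω|} :=
    measurableSet_le measurable_const hX.abs
  have hcompl : {ω : Ω | |Z ω + J ω| < L} = {ω : Ω | L ≤ |Z ω + J ω|}ᶜ := by
    ext ω; simp [not_le]
  have hLα : 2 * C₂ ≤ L ^ α := by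
    rw [hLdef, ← Real.rpow_mul (Nat.cast_nonneg N)]
    exact hLge
  have htailL : ℙ {ω : Ω | L ≤ |Z ω + J ω|} ≤ ENNReal.ofReal (1 / 2) := by
    refine (hZJ.tail_upper L hL0.le).trans (ENNReal.ofReal_le_ofReal ?_)
    have hL1 : L ^ α ≤ (L + 1) ^ α := Real.rpow_le_rpow hL0.le (by linarith) hα0.le
    rw [div_le_iff₀ (by positivity)]
    nlinarith
  have hDup : D ≤ 1 := by
    rw [hDdef]
    exact ENNReal.toReal_le_of_le_ofReal zero_le_one (by simpa using prob_le_one)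
  have hDlow : (1 : ℝ) / 2 ≤ D := by
    have hhalf : (ℙ {ω : Ω | L ≤ |Z ω + J ω|}).toReal ≤ 1 / 2 :=
      ENNReal.toReal_le_of_le_ofReal (by norm_num) htailL
    rw [hDdef, hcompl, prob_compl_eq_one_sub hLmeas,
      ENNReal.toReal_sub_of_le prob_le_one ENNReal.one_ne_top, ENNReal.toReal_one]
    linarith
  have hD0 : (0 : ℝ) < D := by linarith
  -- rewrite tParam
  have htp : Levy.tParam α ν ρ Z J N = ((N : ℝ) * (((N : ℝ) ^ (-α⁻¹)) ^ 2 * I)) / D := by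
    rw [Levy.tParam, hSeq, hDeq]
    congr 2
    simp_rw [mul_pow]
    rw [MeasureTheory.integral_const_mul]
  -- exponent arithmetic
  have e1 : ((N : ℝ) ^ (-α⁻¹)) ^ 2 = (N : ℝ) ^ (-α⁻¹ * 2) := by
    rw [Real.rpow_mul (Nat.cast_nonneg N), Real.rpow_two]
  have e2 : (N : ℝ) * ((N : ℝ) ^ (-α⁻¹)) ^ 2 = (N : ℝ) ^ (1 - 2 * α⁻¹) := by
    rw [e1]
    nth_rewrite 1 [← Real.rpow_one (N : ℝ)]
    rw [← Real.rpow_add hNpos]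
    congr 1; ring
  have hKpow : (N : ℝ) ^ (1 - 2 * α⁻¹) * K ^ (2 - α) = (N : ℝ) ^ ((α - 2) * ν) := by
    rw [hKdef, ← Real.rpow_mul (Nat.cast_nonneg N), ← Real.rpow_add hNpos]
    congr 1
    field_simp
    ring
  set E : ℝ := (N : ℝ) ^ ((α - 2) * ν) with hEdef
  have hE0 : 0 < E := Real.rpow_pos_of_pos hNpos _
  have hNe0 : (0 : ℝ) ≤ (N : ℝ) ^ (1 - 2 * α⁻¹) :=
    (Real.rpow_pos_of_pos hNpos _).le
  set A : ℝ := (N : ℝ) * (((N : ℝ) ^ (-α⁻¹)) ^ 2 * I) with hAdef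
  have hA_eq : A = (N : ℝ) ^ (1 - 2 * α⁻¹) * I := by
    rw [hAdef, ← mul_assoc, e2]
  have hA_low : clow * E ≤ A := by
    rw [hA_eq]
    calc clow * E = (N : ℝ) ^ (1 - 2 * α⁻¹) * (clow * K ^ (2 - α)) := by
          rw [← hKpow]; ring
      _ ≤ (N : ℝ) ^ (1 - 2 * α⁻¹) * I := mul_le_mul_of_nonneg_left hlowI hNe0
  have hA_up : A ≤ Cup * E := by
    rw [hA_eq]
    calc (N : ℝ) ^ (1 - 2 * α⁻¹) * I ≤ (N : ℝ) ^ (1 - 2 * α⁻¹) * (Cup * K ^ (2 - α)) :=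
          mul_le_mul_of_nonneg_left hupI hNe0
      _ = Cup * E := by rw [← hKpow]; ring
  have hA0 : 0 ≤ A := le_trans (mul_pos hclow0 hE0).le hA_low
  rw [htp]
  have hCupE0 : 0 ≤ Cup * E := (mul_pos hCup0 hE0).le
  clear_value A D E I K L M clow Cup
  constructor
  · calc clow * E ≤ A := hA_low
      _ ≤ A / D := by
        rw [le_div_iff₀ hD0]
        calc A * D ≤ A * 1 := mul_le_mul_of_nonneg_left hDup hA0
          _ = A := mul_one A
  · rw [div_le_iff₀ hD0]
    have h1' : (2 * (Cup * E)) * (1 / 2) ≤ (2 * (Cup * E)) * D :=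
      mul_le_mul_of_nonneg_left hDlow (by linarith)
    calc A ≤ Cup * E := hA_up
      _ = (2 * (Cup * E)) * (1 / 2) := by ring
      _ ≤ (2 * (Cup * E)) * D := h1'
      _ = 2 * Cup * E * D := by ring
end
end

section
/- Assume the parameter conditions, let H₁₁ be a random variable with the law of N^{−1/α}𝔷, and let p > α. Then there exists a constant C = C(α, ν, ρ, p, C₁, C₂) > 0 such that for all sufficiently large N: E[|H₁₁|^p · 1_{|H₁₁| < N^{−ν}}] / P[|H₁₁| < N^{−ν}] ≤ C·N^{ν(α−p)−1} and E[|H₁₁|^p · 1_{N^{−ν} ≤ |H₁₁| < N^{−ρ}}] / P[|H₁₁| < N^{−ρ}] ≤ C·N^{ρ(α−p)−1}. (These are the paper's conditional moment bounds E_Ψ[|A_ij|^p | χ_ij] ≤ C·N^{ν(α−p)−1} and E_Ψ[|B_ij|^p] ≤ C·N^{ρ(α−p)−1} for the three-level decomposition.) -/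
open MeasureTheory ProbabilityTheory Matrix Filter
open scoped ENNReal NNReal

noncomputable section

section Aux
open Set

private lemma key_trunc_aux {Ω : Type} [MeasureSpace Ω] [IsProbabilityMeasure (ℙ : Measure Ω)]
    (X : Ω → ℝ) (hX : Measurable X) (hX0 : ∀ ω, 0 ≤ X ω)
    (K p α T : ℝ) (hK : 0 ≤ K) (hα : 0 < α) (hpα : α < p) (hT : 0 < T)
    (htail : ∀ t : ℝ, 0 < t → ℙ {ω | t ≤ X ω} ≤ ENNReal.ofReal (K * t ^ (-α))) :
    ∫ ω in {ω | X ω < T}, X ω ^ p ≤ p * (K * T ^ (p - α) / (p - α)) := by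
  have hp : (0:ℝ) < p := lt_trans hα hpα
  have hpa : (0:ℝ) < p - α := by linarith
  set f : Ω → ℝ := fun ω => if X ω < T then X ω else 0 with hf
  have hfm : Measurable f :=
    Measurable.ite (measurableSet_lt hX measurable_const) hX measurable_const
  have hf0 : ∀ ω, 0 ≤ f ω := fun ω => by by_cases h : X ω < T <;> simp [hf, h, hX0 ω]
  have hfT : ∀ ω, f ω < T := fun ω => by by_cases h : X ω < T <;> simp [hf, h, hT]
  have hSm : MeasurableSet {ω | X ω < T} := measurableSet_lt hX measurable_const
  have h1 : ∫ ω in {ω | X ω < T}, X ω ^ p = ∫ ω, f ω ^ p := by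
    rw [← integral_indicator hSm]
    congr 1
    ext ω
    by_cases h : X ω < T
    · simp [Set.indicator_of_mem, h, hf]
    · simp [Set.indicator_of_notMem, h, hf, Real.zero_rpow hp.ne']
  rw [h1]
  have h2 : ∫ ω, f ω ^ p = (∫⁻ ω, ENNReal.ofReal (f ω ^ p)).toReal := by
    rw [integral_eq_lintegral_of_nonneg_ae
      (Filter.Eventually.of_forall fun ω => Real.rpow_nonneg (hf0 ω) p)
      (((Real.continuous_rpow_const hp.le).measurable.comp hfm).aestronglyMeasurable)]
  rw [h2]
  have h3 : ∫⁻ ω, ENNReal.ofReal (f ω ^ p) =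
      ENNReal.ofReal p * ∫⁻ t in Ioi (0:ℝ), ℙ {ω | t ≤ f ω} * ENNReal.ofReal (t ^ (p - 1)) :=
    lintegral_rpow_eq_lintegral_meas_le_mul ℙ (Filter.Eventually.of_forall hf0)
      hfm.aemeasurable hp
  have h4 : ∫⁻ t in Ioi (0:ℝ), ℙ {ω | t ≤ f ω} * ENNReal.ofReal (t ^ (p - 1)) ≤
      ∫⁻ t in Ioo (0:ℝ) T, ENNReal.ofReal (K * t ^ (p - 1 - α)) := by
    rw [← lintegral_indicator measurableSet_Ioo, ← lintegral_indicator measurableSet_Ioi]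
    apply lintegral_mono
    intro t
    by_cases ht : (0:ℝ) < t
    · rw [Set.indicator_of_mem (by exact ht : t ∈ Ioi (0:ℝ))]
      by_cases htT : t < T
      · rw [Set.indicator_of_mem (Set.mem_Ioo.mpr ⟨ht, htT⟩)]
        have hsub : {ω | t ≤ f ω} ⊆ {ω | t ≤ X ω} := by
          intro ω hω
          simp only [Set.mem_setOf_eq] at hω ⊢
          by_cases h : X ω < T
          · simpa [hf, h] using hω
          · simp only [hf, h, if_false] at hω; linarith
        calc ℙ {ω | t ≤ f ω} * ENNReal.ofReal (t ^ (p - 1))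
            ≤ ENNReal.ofReal (K * t ^ (-α)) * ENNReal.ofReal (t ^ (p - 1)) :=
              mul_le_mul_left (le_trans (measure_mono hsub) (htail t ht)) _
          _ = ENNReal.ofReal (K * t ^ (p - 1 - α)) := by
              rw [← ENNReal.ofReal_mul (by positivity)]
              congr 1
              rw [mul_assoc, ← Real.rpow_add ht]
              ring_nf
      · have : {ω | t ≤ f ω} = ∅ := by
          ext ω; simp only [Set.mem_setOf_eq, Set.mem_empty_iff_false, iff_false, not_le]
          exact lt_of_lt_of_le (hfT ω) (not_lt.mp htT)
        simp [this]
    · rw [Set.indicator_of_notMem (by simpa using ht : t ∉ Ioi (0:ℝ))]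
      exact zero_le
  have h5 : ∫⁻ t in Ioo (0:ℝ) T, ENNReal.ofReal (K * t ^ (p - 1 - α)) =
      ENNReal.ofReal (K * T ^ (p - α) / (p - α)) := by
    have hint : IntegrableOn (fun t : ℝ => K * t ^ (p - 1 - α)) (Ioo 0 T) := by
      apply Integrable.const_mul
      have := (intervalIntegral.intervalIntegrable_rpow' (a := 0) (b := T)
        (show (-1:ℝ) < p - 1 - α by linarith))
      rw [intervalIntegrable_iff_integrableOn_Ioc_of_le hT.le] at this
      exact this.mono_set Set.Ioo_subset_Ioc_self
    rw [← ofReal_integral_eq_lintegral_ofReal hint]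
    · congr 1
      rw [← integral_Ioc_eq_integral_Ioo, ← intervalIntegral.integral_of_le hT.le,
        intervalIntegral.integral_const_mul,
        integral_rpow (Or.inl (by linarith : (-1:ℝ) < p - 1 - α))]
      rw [Real.zero_rpow (by linarith : p - 1 - α + 1 ≠ 0)]
      have : p - 1 - α + 1 = p - α := by ring
      rw [this]
      ring
    · filter_upwards [self_mem_ae_restrict (measurableSet_Ioo : MeasurableSet (Ioo (0:ℝ) T))]
        with t ht
      have := Real.rpow_nonneg (le_of_lt ht.1) (p - 1 - α)
      positivity
  calc (∫⁻ ω, ENNReal.ofReal (f ω ^ p)).toReal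
      ≤ (ENNReal.ofReal p * ENNReal.ofReal (K * T ^ (p - α) / (p - α))).toReal := by
        apply ENNReal.toReal_mono
        · exact ENNReal.mul_ne_top ENNReal.ofReal_ne_top ENNReal.ofReal_ne_top
        · rw [h3]
          exact mul_le_mul_right (le_of_le_of_eq h4 h5) _
    _ = p * (K * T ^ (p - α) / (p - α)) := by
        rw [← ENNReal.ofReal_mul hp.le, ENNReal.toReal_ofReal (by positivity)]

private lemma denom_lb_aux {Ω : Type} [MeasureSpace Ω] [IsProbabilityMeasure (ℙ : Measure Ω)]
    (X : Ω → ℝ) (hX : Measurable X) (T K : ℝ)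
    (htail : ℙ {ω | T ≤ X ω} ≤ ENNReal.ofReal K) (hK : K ≤ 1/2) :
    1/2 ≤ (ℙ {ω | X ω < T}).toReal := by
  have hm : MeasurableSet {ω | T ≤ X ω} := measurableSet_le measurable_const hX
  have hcompl : {ω | X ω < T} = {ω | T ≤ X ω}ᶜ := by ext ω; simp [not_le]
  have h2 : ℙ {ω | T ≤ X ω} ≤ ENNReal.ofReal (1/2) :=
    le_trans htail (ENNReal.ofReal_le_ofReal hK)
  have h3 : ENNReal.ofReal (1/2) ≤ ℙ {ω | X ω < T} := by
    rw [hcompl, prob_compl_eq_one_sub hm]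
    calc ENNReal.ofReal (1/2) = 1 - ENNReal.ofReal (1/2) := by
          rw [← ENNReal.ofReal_one, ← ENNReal.ofReal_sub _ (by norm_num)]; norm_num
      _ ≤ 1 - ℙ {ω | T ≤ X ω} := tsub_le_tsub_left h2 1
  calc (1:ℝ)/2 = (ENNReal.ofReal (1/2)).toReal := by simp
    _ ≤ (ℙ {ω | X ω < T}).toReal := ENNReal.toReal_mono (measure_ne_top _ _) h3

private lemma alg1_aux (N C₂ τ α' : ℝ) (hN : 0 < N) :
    C₂ / N * (N ^ (-τ)) ^ (-α') = C₂ * N ^ (τ * α' - 1) := by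
  have h : -τ * -α' = τ * α' := by ring
  rw [← Real.rpow_mul hN.le, h, Real.rpow_sub hN, Real.rpow_one]; ring

private lemma alg2_aux (N C₂ τ α p : ℝ) (hN : 0 < N) :
    2 * (p * (C₂ / N * (N ^ (-τ)) ^ (p - α) / (p - α))) =
      2 * p * C₂ / (p - α) * N ^ (τ * (α - p) - 1) := by
  have h : -τ * (p - α) = τ * (α - p) := by ring
  rw [← Real.rpow_mul hN.le, h, Real.rpow_sub hN, Real.rpow_one]; ring

private lemma final_div_aux (num den Cb : ℝ) (hnum : 0 ≤ num) (hden : 1/2 ≤ den)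
    (hb : 2 * num ≤ Cb) : num / den ≤ Cb := by
  have h1 : num / den ≤ num / (1/2) :=
    div_le_div_of_nonneg_left hnum (by norm_num) hden
  have h2 : num / (1/2) = 2 * num := by ring
  linarith

end Aux

/-- Lemma 3.13 of the paper: conditional moment bounds for the small and
medium parts of a Lévy matrix entry `H₁₁ = N^{-1/α}(Z+J)` in the three-level decomposition. -/
theorem statement_10
    (α b ν ρ : ℝ) (hpc : Levy.ParamConds α b ν ρ)
    {Ω : Type} [MeasureSpace Ω] [IsProbabilityMeasure (ℙ : Measure Ω)]
    (Z J : Ω → ℝ) (C₁ C₂ : ℝ) (hC₁ : 0 < C₁) (hC₂ : 0 < C₂)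
    (hZJ : Levy.DeformedStable α (Levy.stdSigma α) C₁ C₂ Z J)
    (p : ℝ) (hp : α < p) :
    ∃ C : ℝ, 0 < C ∧ ∃ N₀ : ℕ, ∀ N : ℕ, N₀ ≤ N →
      (∫ ω in {ω | |(N : ℝ) ^ (-α⁻¹) * (Z ω + J ω)| < (N : ℝ) ^ (-ν)},
            |(N : ℝ) ^ (-α⁻¹) * (Z ω + J ω)| ^ p) /
          (ℙ {ω | |(N : ℝ) ^ (-α⁻¹) * (Z ω + J ω)| < (N : ℝ) ^ (-ν)}).toReal ≤
        C * (N : ℝ) ^ (ν * (α - p) - 1) ∧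
      (∫ ω in {ω | (N : ℝ) ^ (-ν) ≤ |(N : ℝ) ^ (-α⁻¹) * (Z ω + J ω)| ∧
              |(N : ℝ) ^ (-α⁻¹) * (Z ω + J ω)| < (N : ℝ) ^ (-ρ)},
            |(N : ℝ) ^ (-α⁻¹) * (Z ω + J ω)| ^ p) /
          (ℙ {ω | |(N : ℝ) ^ (-α⁻¹) * (Z ω + J ω)| < (N : ℝ) ^ (-ρ)}).toReal ≤
        C * (N : ℝ) ^ (ρ * (α - p) - 1) := by
  have hα0 : 0 < α := hpc.hα0
  have hν0 : 0 < ν := hpc.hν0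
  have hρ0 : 0 < ρ := hpc.hρ0
  have hρν : ρ < ν := hpc.hρν
  have hνinv : ν < α⁻¹ := by rw [hpc.hνdef]; linarith [hpc.hb]
  have hαinv : 0 < α⁻¹ := by positivity
  have hνα : ν * α - 1 < 0 := by
    have := mul_lt_mul_of_pos_right hνinv hα0
    rw [inv_mul_cancel₀ hα0.ne'] at this
    linarith
  have hρα : ρ * α - 1 < 0 := by nlinarith
  have hp0 : 0 < p := hα0.trans hp
  have hpa : 0 < p - α := by linarith
  refine ⟨2 * p * C₂ / (p - α), by positivity, ?_⟩
  -- eventual smallness of C₂ * N ^ (τα - 1)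
  have hev : ∀ τ : ℝ, τ * α - 1 < 0 →
      ∀ᶠ n : ℕ in atTop, C₂ * (n : ℝ) ^ (τ * α - 1) ≤ 1/2 := by
    intro τ hτ
    have h1 : Filter.Tendsto (fun x : ℝ => C₂ * x ^ (τ * α - 1)) atTop (nhds 0) := by
      have h2 := tendsto_rpow_neg_atTop (show (0:ℝ) < -(τ * α - 1) by linarith)
      have h3 : (fun x : ℝ => x ^ (τ * α - 1)) = fun x : ℝ => x ^ (-(-(τ * α - 1))) := by
        ext x; norm_num
      rw [show (0:ℝ) = C₂ * 0 by ring]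
      exact Filter.Tendsto.const_mul C₂ (h3 ▸ h2)
    have h4 : ∀ᶠ x : ℝ in atTop, C₂ * x ^ (τ * α - 1) ≤ 1/2 :=
      h1.eventually (eventually_le_nhds (by norm_num))
    exact tendsto_natCast_atTop_atTop.eventually h4
  obtain ⟨N₀, hN₀⟩ := Filter.eventually_atTop.mp
    (((Filter.eventually_ge_atTop 1).and (hev ν hνα)).and (hev ρ hρα))
  refine ⟨N₀, fun N hN => ?_⟩
  obtain ⟨⟨hN1, hc1⟩, hc2⟩ := hN₀ N hN
  have hN0 : (0:ℝ) < N := by exact_mod_cast hN1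
  set X : Ω → ℝ := fun ω => |(N : ℝ) ^ (-α⁻¹) * (Z ω + J ω)| with hXdef
  have hXm : Measurable X := ((hZJ.measZ.add hZJ.measJ).const_mul _).abs
  have hX0 : ∀ ω, 0 ≤ X ω := fun ω => abs_nonneg _
  have hcpos : (0:ℝ) < (N:ℝ) ^ (-α⁻¹) := Real.rpow_pos_of_pos hN0 _
  have hdpos : (0:ℝ) < (N:ℝ) ^ (α⁻¹:ℝ) := Real.rpow_pos_of_pos hN0 _
  have hmul1 : (N:ℝ) ^ (α⁻¹:ℝ) * (N:ℝ) ^ (-α⁻¹) = 1 := by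
    rw [← Real.rpow_add hN0]; simp
  have htail : ∀ t : ℝ, 0 < t →
      ℙ {ω | t ≤ X ω} ≤ ENNReal.ofReal (C₂ / N * t ^ (-α)) := by
    intro t ht
    have hset : {ω | t ≤ X ω} = {ω | (N:ℝ) ^ (α⁻¹:ℝ) * t ≤ |Z ω + J ω|} := by
      ext ω
      simp only [hXdef, Set.mem_setOf_eq, abs_mul, abs_of_pos hcpos]
      constructor
      · intro h
        have := mul_le_mul_of_nonneg_left h hdpos.le
        calc (N:ℝ) ^ (α⁻¹:ℝ) * t ≤ (N:ℝ) ^ (α⁻¹:ℝ) * ((N:ℝ) ^ (-α⁻¹) * |Z ω + J ω|) := this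
          _ = |Z ω + J ω| := by rw [← mul_assoc, hmul1, one_mul]
      · intro h
        have := mul_le_mul_of_nonneg_left h hcpos.le
        calc t = (N:ℝ) ^ (-α⁻¹) * ((N:ℝ) ^ (α⁻¹:ℝ) * t) := by
              rw [← mul_assoc, mul_comm ((N:ℝ) ^ (-α⁻¹)), hmul1, one_mul]
          _ ≤ (N:ℝ) ^ (-α⁻¹) * |Z ω + J ω| := this
    rw [hset]
    refine le_trans (hZJ.tail_upper _ (by positivity)) (ENNReal.ofReal_le_ofReal ?_)
    have h1 : ((N:ℝ) ^ (α⁻¹:ℝ) * t) ^ α = N * t ^ α := by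
      rw [Real.mul_rpow hdpos.le ht.le, ← Real.rpow_mul hN0.le,
        inv_mul_cancel₀ hα0.ne', Real.rpow_one]
    have h2 : C₂ / (N:ℝ) * t ^ (-α) = C₂ / ((N:ℝ) * t ^ α) := by
      rw [Real.rpow_neg ht.le]; ring
    rw [h2]
    have h3 : (N:ℝ) * t ^ α ≤ ((N:ℝ) ^ (α⁻¹:ℝ) * t + 1) ^ α := by
      rw [← h1]
      exact Real.rpow_le_rpow (by positivity) (by linarith) hα0.le
    have h4 : (0:ℝ) < (N:ℝ) * t ^ α := by positivity
    exact div_le_div_of_nonneg_left hC₂.le h4 h3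
  have hKnn : (0:ℝ) ≤ C₂ / N := by positivity
  -- numerator bounds from the key truncated-moment lemma
  have hnum1 := key_trunc_aux X hXm hX0 (C₂ / N) p α ((N:ℝ) ^ (-ν)) hKnn hα0 hp
    (Real.rpow_pos_of_pos hN0 _) htail
  have hnum2 := key_trunc_aux X hXm hX0 (C₂ / N) p α ((N:ℝ) ^ (-ρ)) hKnn hα0 hp
    (Real.rpow_pos_of_pos hN0 _) htail
  -- denominator bounds
  have hden1 : 1/2 ≤ (ℙ {ω | X ω < (N:ℝ) ^ (-ν)}).toReal := by
    refine denom_lb_aux X hXm _ (C₂ / N * ((N:ℝ) ^ (-ν)) ^ (-α))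
      (htail _ (Real.rpow_pos_of_pos hN0 _)) ?_
    rw [alg1_aux _ _ _ _ hN0]; exact hc1
  have hden2 : 1/2 ≤ (ℙ {ω | X ω < (N:ℝ) ^ (-ρ)}).toReal := by
    refine denom_lb_aux X hXm _ (C₂ / N * ((N:ℝ) ^ (-ρ)) ^ (-α))
      (htail _ (Real.rpow_pos_of_pos hN0 _)) ?_
    rw [alg1_aux _ _ _ _ hN0]; exact hc2
  have hSm1 : MeasurableSet {ω | X ω < (N:ℝ) ^ (-ν)} := measurableSet_lt hXm measurable_const
  have hSm2 : MeasurableSet {ω | X ω < (N:ℝ) ^ (-ρ)} := measurableSet_lt hXm measurable_const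
  have hXpm : Measurable fun ω => X ω ^ p :=
    (Real.continuous_rpow_const hp0.le).measurable.comp hXm
  have hnn1 : 0 ≤ ∫ ω in {ω | X ω < (N:ℝ) ^ (-ν)}, X ω ^ p :=
    setIntegral_nonneg hSm1 fun ω _ => Real.rpow_nonneg (hX0 ω) p
  -- strip numerator and its nonnegativity
  have hintOn : IntegrableOn (fun ω => X ω ^ p) {ω | X ω < (N:ℝ) ^ (-ρ)} ℙ := by
    refine Measure.integrableOn_of_bounded (M := ((N:ℝ) ^ (-ρ)) ^ p) (measure_ne_top _ _)
      hXpm.aestronglyMeasurable ?_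
    rw [ae_restrict_iff' hSm2]
    refine Filter.Eventually.of_forall fun ω hω => ?_
    rw [Real.norm_eq_abs, abs_of_nonneg (Real.rpow_nonneg (hX0 ω) p)]
    exact Real.rpow_le_rpow (hX0 ω) (le_of_lt hω) hp0.le
  have hstrip : ∫ ω in {ω | (N:ℝ) ^ (-ν) ≤ X ω ∧ X ω < (N:ℝ) ^ (-ρ)}, X ω ^ p ≤
      ∫ ω in {ω | X ω < (N:ℝ) ^ (-ρ)}, X ω ^ p := by
    refine setIntegral_mono_set hintOn ?_ ?_
    · exact Filter.Eventually.of_forall fun ω => Real.rpow_nonneg (hX0 ω) p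
    · exact Filter.Eventually.of_forall fun ω hω => hω.2
  have hSsm : MeasurableSet {ω | (N:ℝ) ^ (-ν) ≤ X ω ∧ X ω < (N:ℝ) ^ (-ρ)} :=
    (measurableSet_le measurable_const hXm).inter (measurableSet_lt hXm measurable_const)
  have hnn2 : 0 ≤ ∫ ω in {ω | (N:ℝ) ^ (-ν) ≤ X ω ∧ X ω < (N:ℝ) ^ (-ρ)}, X ω ^ p :=
    setIntegral_nonneg hSsm fun ω _ => Real.rpow_nonneg (hX0 ω) p
  constructor
  · refine final_div_aux _ _ _ hnn1 hden1 ?_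
    calc 2 * ∫ ω in {ω | X ω < (N:ℝ) ^ (-ν)}, X ω ^ p
        ≤ 2 * (p * (C₂ / N * ((N:ℝ) ^ (-ν)) ^ (p - α) / (p - α))) := by linarith
      _ = 2 * p * C₂ / (p - α) * (N:ℝ) ^ (ν * (α - p) - 1) := alg2_aux _ _ _ _ _ hN0
  · refine final_div_aux _ _ _ hnn2 hden2 ?_
    calc 2 * ∫ ω in {ω | (N:ℝ) ^ (-ν) ≤ X ω ∧ X ω < (N:ℝ) ^ (-ρ)}, X ω ^ p
        ≤ 2 * (p * (C₂ / N * ((N:ℝ) ^ (-ρ)) ^ (p - α) / (p - α))) := by linarith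
      _ = 2 * p * C₂ / (p - α) * (N:ℝ) ^ (ρ * (α - p) - 1) := alg2_aux _ _ _ _ _ hN0
end
end

section
/- Let N be a positive integer, M an N×N real symmetric matrix, z = E + iη ∈ ℍ, and write G = (M − z)^{−1}. For an index i ∈ [1,N], let M^{(i)} denote M with its i-th row and column set to zero, and G^{(i)} = (M^{(i)} − z)^{−1}. Then for any r ∈ [1,2] one has the deterministic estimate N^{−1} Σ_{j=1}^N |G_jj − G^{(i)}_jj|^r ≤ 8/(N·η^r). -/
open MeasureTheory ProbabilityTheory Matrix Filter
open scoped ENNReal NNReal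

noncomputable section

section Aux12

/-- A real symmetric matrix, viewed as a complex matrix, is Hermitian. -/
lemma aux12_isHermitian {N : ℕ} (M : Matrix (Fin N) (Fin N) ℝ) (hM : M.IsSymm) :
    (M.map (fun x : ℝ => (x : ℂ))).IsHermitian := by
  ext j k
  simp only [Matrix.conjTranspose_apply, Matrix.map_apply, Complex.star_def,
    Complex.conj_ofReal, Complex.ofReal_inj]
  exact hM.apply j k

/-- `M - z` is invertible for `M` real symmetric and `z` non-real. -/
lemma aux12_detUnit {N : ℕ} (M : Matrix (Fin N) (Fin N) ℝ) (hM : M.IsSymm)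
    (z : ℂ) (hz : z.im ≠ 0) :
    IsUnit (M.map (fun x : ℝ => (x : ℂ)) - z • (1 : Matrix (Fin N) (Fin N) ℂ)).det := by
  have hH := aux12_isHermitian M hM
  set U : Matrix (Fin N) (Fin N) ℂ := (hH.eigenvectorUnitary : Matrix (Fin N) (Fin N) ℂ)
    with hUdef
  have hU1 : U * star U = 1 := Matrix.mem_unitaryGroup_iff.mp hH.eigenvectorUnitary.2
  have key : M.map (fun x : ℝ => (x : ℂ)) - z • (1 : Matrix (Fin N) (Fin N) ℂ) =
      U * (Matrix.diagonal (fun k => (hH.eigenvalues k : ℂ) - z)) * star U := by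
    have hd : (Matrix.diagonal (fun k : Fin N => (hH.eigenvalues k : ℂ) - z)) =
        Matrix.diagonal (Complex.ofReal ∘ hH.eigenvalues) - z • 1 := by
      rw [Matrix.smul_one_eq_diagonal, ← Matrix.diagonal_sub]
      rfl
    rw [hd, Matrix.mul_sub, Matrix.sub_mul]
    congr 1
    · exact hH.spectral_theorem
    · rw [Matrix.mul_smul, Matrix.mul_one, Matrix.smul_mul, hU1]
  rw [key, Matrix.det_mul, Matrix.det_mul, mul_comm, ← mul_assoc, ← Matrix.det_mul]
  have hU2 : star U * U = 1 := Matrix.mem_unitaryGroup_iff'.mp hH.eigenvectorUnitary.2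
  rw [hU2, Matrix.det_one, one_mul, Matrix.det_diagonal]
  rw [isUnit_iff_ne_zero]
  refine Finset.prod_ne_zero_iff.mpr fun k _ => ?_
  intro h
  apply hz
  have := congrArg Complex.im h
  simpa using this

/-- Elementary `rpow` estimate: `x ^ r ≤ c ^ (r - 1) * x` for `0 ≤ x ≤ c`, `1 ≤ r`. -/
lemma aux12_rpow_le {x c r : ℝ} (hx : 0 ≤ x) (hxc : x ≤ c) (hr : 1 ≤ r) :
    x ^ r ≤ c ^ (r - 1) * x := by
  rcases eq_or_lt_of_le hx with h | h
  · rw [← h, Real.zero_rpow (by linarith), mul_zero]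
  · have hxr : x ^ r = x ^ (r - 1) * x := by
      rw [← Real.rpow_add_one h.ne' (r - 1)]
      congr 1
      ring
    rw [hxr]
    exact mul_le_mul_of_nonneg_right
      (Real.rpow_le_rpow h.le hxc (by linarith)) h.le

end Aux12

/-- Corollary 4.7 of the paper: the deterministic rank-one perturbation
estimate `N⁻¹ Σ_j |G_jj - G^{(i)}_jj|^r ≤ 8 / (N η^r)` for `r ∈ [1,2]`. -/
theorem statement_12
    (N : ℕ) (hN : 0 < N) (M : Matrix (Fin N) (Fin N) ℝ) (hM : M.IsSymm)
    (z : ℂ) (hz : 0 < z.im) (i : Fin N) (r : ℝ) (hr : r ∈ Set.Icc (1 : ℝ) 2) :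
    (N : ℝ)⁻¹ * ∑ j : Fin N,
        (‖Levy.resolv M z j j - Levy.resolv (Levy.minorMat M i) z j j‖) ^ r ≤
      8 / ((N : ℝ) * z.im ^ r) := by
  obtain ⟨hr1, hr2⟩ := hr
  have hη0 : 0 < z.im := hz
  have hz0 : z ≠ 0 := fun h => by simp [h] at hη0
  set A : Matrix (Fin N) (Fin N) ℂ := M.map (fun x : ℝ => (x : ℂ)) - z • 1 with hA
  set G : Matrix (Fin N) (Fin N) ℂ := A⁻¹ with hG
  set g : ℂ := G i i with hgdef
  have hres1 : Levy.resolv M z = G := by rw [hG, hA]; rfl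
  have hdet : IsUnit A.det := by
    rw [hA]; exact aux12_detUnit M hM z (ne_of_gt hη0)
  have hAG : A * G = 1 := by rw [hG]; exact Matrix.mul_nonsing_inv A hdet
  have hGinv : G = A⁻¹ := hG
  clear_value A
  clear_value G
  clear_value g
  -- symmetry of G
  have hAsymm : Aᵀ = A := by
    rw [hA, Matrix.transpose_sub, Matrix.transpose_smul, Matrix.transpose_one,
      ← Matrix.transpose_map, hM]
  have hGsymm : ∀ j k, G j k = G k j := by
    intro j k
    have h1 : Gᵀ = G := by rw [hGinv, Matrix.transpose_nonsing_inv, hAsymm]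
    calc G j k = Gᵀ k j := rfl
      _ = G k j := by rw [h1]
  -- Ward identity
  have hherm := aux12_isHermitian M hM
  have hGHA : Gᴴ * Aᴴ = 1 := by
    rw [← Matrix.conjTranspose_mul, hAG, Matrix.conjTranspose_one]
  have hward : Gᴴ - G = ((starRingEnd ℂ) z - z) • (Gᴴ * G) := by
    have h1 : Gᴴ * (A * G) = Gᴴ := by rw [hAG, Matrix.mul_one]
    have h3 : A - Aᴴ = ((starRingEnd ℂ) z - z) • (1 : Matrix (Fin N) (Fin N) ℂ) := by
      rw [hA, Matrix.conjTranspose_sub, hherm, Matrix.conjTranspose_smul,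
        Matrix.conjTranspose_one, sub_smul]
      simp only [Complex.star_def]
      abel
    calc Gᴴ - G = Gᴴ * (A * G) - (Gᴴ * Aᴴ) * G := by rw [h1, hGHA, Matrix.one_mul]
      _ = Gᴴ * ((A - Aᴴ) * G) := by
          simp only [Matrix.sub_mul, Matrix.mul_sub, Matrix.mul_assoc]
      _ = ((starRingEnd ℂ) z - z) • (Gᴴ * G) := by
          rw [h3, Matrix.smul_mul, Matrix.one_mul, Matrix.mul_smul]
  set S : ℝ := ∑ k, Complex.normSq (G k i) with hS
  clear_value S
  have hentry : (starRingEnd ℂ) g - g = ((starRingEnd ℂ) z - z) * (S : ℂ) := by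
    have h0 := congrFun (congrFun hward i) i
    simp only [Matrix.sub_apply, Matrix.smul_apply, Matrix.conjTranspose_apply,
      smul_eq_mul, Complex.star_def] at h0
    rw [← hgdef] at h0
    rw [h0]
    congr 1
    rw [Matrix.mul_apply, hS]
    rw [Complex.ofReal_sum]
    refine Finset.sum_congr rfl fun k _ => ?_
    simp only [Matrix.conjTranspose_apply, Complex.star_def, Complex.normSq_eq_conj_mul_self]
  have him : g.im = z.im * S := by
    have h0 := congrArg Complex.im hentry
    simp only [Complex.sub_im, Complex.conj_im, Complex.mul_im, Complex.ofReal_im,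
      Complex.ofReal_re, Complex.sub_re, Complex.conj_re, mul_zero, add_zero, sub_self,
      zero_mul, sub_zero] at h0
    linarith
  have hScol : ∃ k, G k i ≠ 0 := by
    by_contra h
    push_neg at h
    have h1 : (A * G) i i = 1 := by rw [hAG]; simp
    rw [Matrix.mul_apply] at h1
    simp [h] at h1
  have hSpos : 0 < S := by
    obtain ⟨k, hk⟩ := hScol
    have h2 : 0 < Complex.normSq (G k i) := Complex.normSq_pos.mpr hk
    have h3 : Complex.normSq (G k i) ≤ S := by
      rw [hS]
      exact Finset.single_le_sum (f := fun k => Complex.normSq (G k i))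
        (fun _ _ => Complex.normSq_nonneg _) (Finset.mem_univ k)
    linarith
  have hgim : 0 < g.im := him ▸ mul_pos hη0 hSpos
  have hg0 : g ≠ 0 := fun h => by simp [h] at hgim
  have habsg_pos : 0 < ‖g‖ := norm_pos_iff.mpr hg0
  have hgS : ‖g‖ ^ 2 ≤ S := by
    rw [Complex.sq_norm, hgdef, hS]
    exact Finset.single_le_sum (f := fun k => Complex.normSq (G k i))
      (fun _ _ => Complex.normSq_nonneg _) (Finset.mem_univ i)
  have him_le : g.im ≤ ‖g‖ := Complex.im_le_norm g
  have hgabs_le : ‖g‖ ≤ (z.im)⁻¹ := by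
    have h1 : z.im * ‖g‖ ^ 2 ≤ ‖g‖ := by nlinarith
    rw [show (z.im)⁻¹ = 1 / z.im by ring, le_div_iff₀ hη0]
    nlinarith
  have hSg : S / ‖g‖ ≤ (z.im)⁻¹ := by
    rw [div_le_iff₀ habsg_pos, show (z.im)⁻¹ = 1 / z.im by ring, div_mul_eq_mul_div,
      le_div_iff₀ hη0]
    nlinarith
  -- explicit formula for the resolvent of the minor
  set D : Matrix (Fin N) (Fin N) ℂ :=
    Matrix.of (fun j k => G j k - g⁻¹ * (G j i * G i k) -
      z⁻¹ * (if j = i ∧ k = i then 1 else 0)) with hD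
  clear_value D
  set A' : Matrix (Fin N) (Fin N) ℂ :=
    (Levy.minorMat M i).map (fun x : ℝ => (x : ℂ)) - z • 1 with hA'
  have hrowAD : ∀ p k, ∑ l, A p l * D l k =
      (if p = k then 1 else 0) - g⁻¹ * ((if p = i then 1 else 0) * G i k)
        - z⁻¹ * (A p i * (if k = i then 1 else 0)) := by
    intro p k
    have e1 : ∀ q, ∑ l, A p l * G l q = (if p = q then 1 else 0) := by
      intro q
      rw [← Matrix.mul_apply, hAG, Matrix.one_apply]
    calc ∑ l, A p l * D l k
        = ∑ l, (A p l * G l k - (g⁻¹ * G i k) * (A p l * G l i)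
            - (if l = i then z⁻¹ * (A p i * (if k = i then 1 else 0)) else 0)) := by
          refine Finset.sum_congr rfl fun l _ => ?_
          rw [hD]
          simp only [Matrix.of_apply]
          by_cases hl : l = i
          · by_cases hk : k = i <;> simp [hl, hk] <;> ring
          · simp [hl]
            ring
      _ = (if p = k then 1 else 0) - g⁻¹ * ((if p = i then 1 else 0) * G i k)
            - z⁻¹ * (A p i * (if k = i then 1 else 0)) := by
          rw [Finset.sum_sub_distrib, Finset.sum_sub_distrib, ← Finset.mul_sum,
            e1 k, e1 i, Finset.sum_ite_eq' Finset.univ i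
              (fun _ => z⁻¹ * (A p i * (if k = i then 1 else 0)))]
          simp only [Finset.mem_univ, if_true]
          ring
  have hDik : ∀ k, D i k = -(z⁻¹ * (if k = i then 1 else 0)) := by
    intro k
    rw [hD]
    simp only [Matrix.of_apply, true_and, ← hgdef]
    rw [inv_mul_cancel_left₀ hg0]
    ring
  have hA'row : ∀ j l, A' j l = A j l - (if j = i then 1 else 0) * A i l
      - A j i * (if l = i then 1 else 0)
      + (A i i - z) * ((if j = i then 1 else 0) * (if l = i then 1 else 0)) := by
    intro j l
    simp only [hA', hA, Matrix.sub_apply, Matrix.map_apply, Matrix.smul_apply,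
      Matrix.one_apply, Levy.minorMat, Matrix.of_apply, smul_eq_mul]
    by_cases hj : j = i
    · by_cases hl : l = i
      · simp [hj, hl]
        try ring
      · have hl' : ¬ i = l := fun h => hl h.symm
        simp [hj, hl, hl']
        try ring
    · by_cases hl : l = i
      · have hj' : ¬ i = j := fun h => hj h.symm
        simp [hj, hl, hj']
        try ring
      · simp [hj, hl]
        try ring
  have hA'D : A' * D = 1 := by
    ext j k
    rw [Matrix.mul_apply, Matrix.one_apply]
    calc ∑ l, A' j l * D l k
        = ∑ l, (A j l * D l k - (if j = i then 1 else 0) * (A i l * D l k)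
            - (A j i) * ((if l = i then 1 else 0) * D l k)
            + ((A i i - z) * (if j = i then 1 else 0)) * ((if l = i then 1 else 0) * D l k)) := by
          refine Finset.sum_congr rfl fun l _ => ?_
          rw [hA'row j l]
          ring
      _ = (∑ l, A j l * D l k) - (if j = i then 1 else 0) * (∑ l, A i l * D l k)
            - (A j i) * D i k + ((A i i - z) * (if j = i then 1 else 0)) * D i k := by
          rw [Finset.sum_add_distrib, Finset.sum_sub_distrib, Finset.sum_sub_distrib,
            ← Finset.mul_sum, ← Finset.mul_sum, ← Finset.mul_sum]
          have hpick : ∑ l, (if l = i then (1 : ℂ) else 0) * D l k = D i k := by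
            simp
          rw [hpick]
      _ = if j = k then 1 else 0 := by
          rw [hrowAD j k, hrowAD i k, hDik k]
          by_cases hj : j = i
          · by_cases hk : k = i
            · have hjk : j = k := by rw [hj, hk]
              simp only [hj, hk, hjk, if_pos rfl, if_true]
              field_simp
              ring
            · have hk' : ¬ i = k := fun h => hk h.symm
              have hjk : ¬ j = k := by rw [hj]; exact hk'
              simp [hj, hk, hk', hjk]
              try ring
          · by_cases hk : k = i
            · have hj' : ¬ i = j := fun h => hj h.symm
              have hjk : ¬ j = k := by rw [hk]; exact hj
              simp [hj, hk, hj', hjk]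
              try ring
            · simp [hj, hk]
              try ring
  have hres2 : Levy.resolv (Levy.minorMat M i) z = D := by
    have h := Matrix.inv_eq_right_inv hA'D
    rw [hA'] at h
    exact h
  -- the difference of diagonal resolvent entries
  have hdiffval : ∀ j, Levy.resolv M z j j - Levy.resolv (Levy.minorMat M i) z j j
      = g⁻¹ * (G j i * G i j) + z⁻¹ * (if j = i then 1 else 0) := by
    intro j
    rw [hres1, hres2, hD]
    simp only [Matrix.of_apply, and_self]
    ring
  have habs_off : ∀ j, j ≠ i →
      ‖Levy.resolv M z j j - Levy.resolv (Levy.minorMat M i) z j j‖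
        = ‖G j i‖ ^ 2 / ‖g‖ := by
    intro j hj
    rw [hdiffval j, if_neg hj, mul_zero, add_zero, hGsymm i j]
    rw [norm_mul, norm_mul, norm_inv, sq, div_eq_mul_inv]
    ring
  have hsq_le : ∀ j : Fin N, ‖G j i‖ ^ 2 ≤ S := by
    intro j
    rw [Complex.sq_norm, hS]
    exact Finset.single_le_sum (f := fun k => Complex.normSq (G k i))
      (fun _ _ => Complex.normSq_nonneg _) (Finset.mem_univ j)
  -- bounding the off-diagonal sum
  have hsum_off : ∑ j ∈ Finset.univ.erase i, ‖G j i‖ ^ 2 / ‖g‖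
      ≤ (z.im)⁻¹ := by
    calc ∑ j ∈ Finset.univ.erase i, ‖G j i‖ ^ 2 / ‖g‖
        ≤ ∑ j : Fin N, ‖G j i‖ ^ 2 / ‖g‖ :=
          Finset.sum_le_sum_of_subset_of_nonneg (Finset.erase_subset i Finset.univ)
            (fun _ _ _ => by positivity)
      _ = S / ‖g‖ := by
          rw [← Finset.sum_div, hS]
          congr 1
          exact Finset.sum_congr rfl fun k _ => Complex.sq_norm _
      _ ≤ (z.im)⁻¹ := hSg
  have hterm_off : ∀ j ∈ Finset.univ.erase i,
      (‖Levy.resolv M z j j - Levy.resolv (Levy.minorMat M i) z j j‖) ^ r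
        ≤ (z.im)⁻¹ ^ (r - 1) * (‖G j i‖ ^ 2 / ‖g‖) := by
    intro j hj
    have hjne : j ≠ i := Finset.ne_of_mem_erase hj
    rw [habs_off j hjne]
    refine aux12_rpow_le (by positivity) ?_ hr1
    calc ‖G j i‖ ^ 2 / ‖g‖ ≤ S / ‖g‖ := by
          gcongr
          exact hsq_le j
      _ ≤ (z.im)⁻¹ := hSg
  have hsum_bound : ∑ j ∈ Finset.univ.erase i,
      (‖Levy.resolv M z j j - Levy.resolv (Levy.minorMat M i) z j j‖) ^ r
        ≤ (z.im)⁻¹ ^ r := by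
    calc ∑ j ∈ Finset.univ.erase i,
        (‖Levy.resolv M z j j - Levy.resolv (Levy.minorMat M i) z j j‖) ^ r
        ≤ ∑ j ∈ Finset.univ.erase i,
            (z.im)⁻¹ ^ (r - 1) * (‖G j i‖ ^ 2 / ‖g‖) :=
          Finset.sum_le_sum hterm_off
      _ = (z.im)⁻¹ ^ (r - 1) *
            ∑ j ∈ Finset.univ.erase i, ‖G j i‖ ^ 2 / ‖g‖ := by
          rw [Finset.mul_sum]
      _ ≤ (z.im)⁻¹ ^ (r - 1) * (z.im)⁻¹ :=
          mul_le_mul_of_nonneg_left hsum_off (Real.rpow_nonneg (by positivity) _)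
      _ = (z.im)⁻¹ ^ r := by
          rw [← Real.rpow_add_one (by positivity : ((z.im)⁻¹ : ℝ) ≠ 0) (r - 1)]
          congr 1
          ring
  -- the diagonal term
  have hterm_i : (‖Levy.resolv M z i i - Levy.resolv (Levy.minorMat M i) z i i‖) ^ r
      ≤ 4 * (z.im)⁻¹ ^ r := by
    have h1 : ‖Levy.resolv M z i i - Levy.resolv (Levy.minorMat M i) z i i‖
        ≤ 2 * (z.im)⁻¹ := by
      rw [hdiffval i, if_pos rfl, mul_one]
      have hgg : g⁻¹ * (G i i * G i i) = g := by
        rw [← hgdef, inv_mul_cancel_left₀ hg0]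
      rw [hgg]
      have hzinv : ‖z⁻¹‖ ≤ (z.im)⁻¹ := by
        rw [norm_inv]
        apply inv_anti₀ hη0
        calc z.im ≤ |z.im| := le_abs_self _
          _ ≤ ‖z‖ := Complex.abs_im_le_norm z
      calc ‖g + z⁻¹‖ ≤ ‖g‖ + ‖z⁻¹‖ := norm_add_le _ _
        _ ≤ (z.im)⁻¹ + (z.im)⁻¹ := add_le_add hgabs_le hzinv
        _ = 2 * (z.im)⁻¹ := by ring
    calc (‖Levy.resolv M z i i - Levy.resolv (Levy.minorMat M i) z i i‖) ^ r
        ≤ (2 * (z.im)⁻¹) ^ r := Real.rpow_le_rpow (by positivity) h1 (by linarith)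
      _ = 2 ^ r * (z.im)⁻¹ ^ r := Real.mul_rpow (by norm_num) (by positivity)
      _ ≤ 4 * (z.im)⁻¹ ^ r := by
          have h2 : (2 : ℝ) ^ r ≤ 2 ^ (2 : ℝ) :=
            Real.rpow_le_rpow_of_exponent_le one_le_two hr2
          have h4 : (2 : ℝ) ^ (2 : ℝ) = 4 := by
            rw [show (2 : ℝ) = ((2 : ℕ) : ℝ) from by norm_num, Real.rpow_natCast]
            norm_num
          have h5 : (0 : ℝ) ≤ (z.im)⁻¹ ^ r := Real.rpow_nonneg (by positivity) _
          nlinarith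
  -- total
  have htotal : ∑ j : Fin N,
      (‖Levy.resolv M z j j - Levy.resolv (Levy.minorMat M i) z j j‖) ^ r
        ≤ 8 * (z.im)⁻¹ ^ r := by
    rw [← Finset.add_sum_erase _ _ (Finset.mem_univ i)]
    have h5 : (0 : ℝ) ≤ (z.im)⁻¹ ^ r := Real.rpow_nonneg (by positivity) _
    linarith [add_le_add hterm_i hsum_bound]
  have hrw : 8 / ((N : ℝ) * z.im ^ r) = (N : ℝ)⁻¹ * (8 * (z.im)⁻¹ ^ r) := by
    rw [Real.inv_rpow hη0.le]
    have hNpos : (0 : ℝ) < N := Nat.cast_pos.mpr hN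
    have hpow : (0 : ℝ) < z.im ^ r := Real.rpow_pos_of_pos hη0 r
    field_simp
  rw [hrw]
  exact mul_le_mul_of_nonneg_left htotal (by positivity)
end
end

section
/- Fix α ∈ (0,2). There exists a constant C = C(α) > 0 such that the following holds for every positive integer N and every η > 0. Let y₁, …, y_N be i.i.d. standard Gaussian random variables and let v₁, …, v_N be real numbers with 0 ≤ v_j ≤ 1/η for every j. Then P[ | N^{−1} Σ_{j=1}^N v_j^{α/2} ( |y_j|^α − E[|y_j|^α] ) | > C·(log N)⁴ / (N^{1/2}·η^{α/2}) ] < C·exp(−(log N)²/C). -/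
open MeasureTheory ProbabilityTheory Matrix Filter
open scoped ENNReal NNReal

noncomputable section

section AuxStatement13
open Real
set_option maxHeartbeats 1000000

lemma exp_le_aux (x : ℝ) : Real.exp x ≤ 1 + x + x^2 * Real.exp |x| := by
  rcases le_or_gt 0 x with hx | hx
  · rw [abs_of_nonneg hx]
    have hb : 1 - x ≤ Real.exp (-x) := by linarith [Real.add_one_le_exp (-x)]
    have hab : Real.exp x * Real.exp (-x) = 1 := by rw [← Real.exp_add]; simp
    have h1 : (1 - x) * Real.exp x ≤ 1 := by
      calc (1 - x) * Real.exp x ≤ Real.exp (-x) * Real.exp x :=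
        mul_le_mul_of_nonneg_right hb (Real.exp_pos x).le
      _ = 1 := by rw [mul_comm]; exact hab
    nlinarith [mul_nonneg (by linarith : (0:ℝ) ≤ 1 + x) (by linarith : 0 ≤ 1 - (1-x)*Real.exp x)]
  · rw [abs_of_neg hx]
    set t := -x with ht
    have ht0 : 0 < t := by simp [ht]; linarith
    have h1 : 1 + t ≤ Real.exp t := by linarith [Real.add_one_le_exp t]
    have hab : Real.exp t * Real.exp (-t) = 1 := by rw [← Real.exp_add]; simp
    have hx' : x = -t := by simp [ht]
    rw [hx']
    -- goal : exp (-t) ≤ 1 + -t + (-t)^2 * exp t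
    have h2 : (1 + t) * Real.exp (-t) ≤ 1 := by
      calc (1 + t) * Real.exp (-t) ≤ Real.exp t * Real.exp (-t) :=
        mul_le_mul_of_nonneg_right h1 (Real.exp_pos _).le
      _ = 1 := hab
    have h3 : (1:ℝ) ≤ (1 + t) * (1 - t + t^2 * Real.exp t) := by nlinarith [Real.exp_pos t, mul_pos ht0 (mul_pos ht0 (mul_pos ht0 (Real.exp_pos t)))]
    have h4 : Real.exp (-t) ≤ 1 - t + t^2 * Real.exp t := by
      have := h2.trans h3
      have h1t : (0:ℝ) < 1 + t := by linarith
      exact le_of_mul_le_mul_left (by linarith [this]) h1t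
    linarith [h4]

lemma sq_le_four_exp {t : ℝ} (ht : 0 ≤ t) : t^2 ≤ 4 * Real.exp t := by
  have h1 : 1 + t/2 ≤ Real.exp (t/2) := by linarith [Real.add_one_le_exp (t/2)]
  have h2 : Real.exp (t/2) * Real.exp (t/2) = Real.exp t := by rw [← Real.exp_add]; ring_nf
  nlinarith [Real.exp_pos (t/2)]

lemma rpow_quad_bound {α : ℝ} (hα0 : 0 < α) (hα2 : α < 2) :
    ∃ M : ℝ, 0 ≤ M ∧ ∀ u : ℝ, 0 ≤ u → 2 * u ^ α ≤ u^2 / 4 + M := by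
  set R : ℝ := (8:ℝ) ^ ((2 - α)⁻¹) with hR
  have hR1 : 1 ≤ R := Real.one_le_rpow (by norm_num) (by rw [inv_nonneg]; linarith)
  have hR0 : 0 < R := lt_of_lt_of_le one_pos hR1
  refine ⟨2 * R ^ α, by positivity, fun u hu => ?_⟩
  rcases le_or_gt u R with h | h
  · have : u ^ α ≤ R ^ α := Real.rpow_le_rpow hu h hα0.le
    nlinarith [sq_nonneg u]
  · have hu0 : 0 < u := hR0.trans h
    have key : u ^ (α - 2) ≤ R ^ (α - 2) :=
      Real.rpow_le_rpow_of_nonpos hR0 h.le (by linarith)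
    have hRval : R ^ (α - 2) = 8⁻¹ := by
      rw [hR, ← Real.rpow_mul (by norm_num : (0:ℝ) ≤ 8)]
      have h2 : (2:ℝ) - α ≠ 0 := by linarith
      have h3 : (2 - α)⁻¹ * (α - 2) = -1 := by
        rw [show α - 2 = -(2-α) by ring, mul_neg, inv_mul_cancel₀ h2]
      rw [h3]
      rw [Real.rpow_neg_one]
    have hsplit : u ^ α = u ^ (α - 2) * u ^ 2 := by
      rw [← Real.rpow_natCast u 2, ← Real.rpow_add hu0]
      norm_num
    have h8 : u ^ (α - 2) ≤ 8⁻¹ := by rw [hRval] at key; exact key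
    have : u ^ α ≤ 8⁻¹ * u ^ 2 := by
      rw [hsplit]; exact mul_le_mul_of_nonneg_right h8 (sq_nonneg u)
    nlinarith [Real.rpow_nonneg hR0.le α]

lemma integrable_gaussian_of_bound {f : ℝ → ℝ} {c : ℝ} (hf : Measurable f)
    (h : ∀ x, |f x| ≤ c * Real.exp (x^2/4)) : Integrable f (gaussianReal 0 1) := by
  rw [gaussianReal_of_var_ne_zero 0 one_ne_zero,
    integrable_withDensity_iff (measurable_gaussianPDF 0 1)
      (ae_of_all _ fun x => ENNReal.ofReal_lt_top)]
  have hpdf : ∀ x, (gaussianPDF 0 1 x).toReal = gaussianPDFReal 0 1 x := fun x =>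
    ENNReal.toReal_ofReal (gaussianPDFReal_nonneg 0 1 x)
  have hd : ∀ x : ℝ, gaussianPDFReal 0 1 x ≤ Real.exp (-(x^2/2)) := by
    intro x
    simp only [gaussianPDFReal, NNReal.coe_one, mul_one, sub_zero, one_div]
    have h1 : (1:ℝ) ≤ Real.sqrt (2 * π) := Real.one_le_sqrt.mpr (by nlinarith [Real.pi_gt_three])
    have h2 : (Real.sqrt (2 * π))⁻¹ ≤ 1 := inv_le_one_of_one_le₀ h1
    have h3 : -x^2/2 = -(x^2/2) := by ring
    rw [h3]
    nlinarith [Real.exp_pos (-(x^2/2))]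
  have hc : 0 ≤ c := by
    have := (abs_nonneg (f 0)).trans (h 0)
    nlinarith [Real.exp_pos ((0:ℝ)^2/4)]
  refine Integrable.mono' ((integrable_exp_neg_mul_sq (by norm_num : (0:ℝ) < 1/4)).const_mul c)
    (hf.mul (measurable_gaussianPDF 0 1).ennreal_toReal).aestronglyMeasurable
    (ae_of_all _ fun x => ?_)
  rw [Real.norm_eq_abs, abs_mul, hpdf, abs_of_nonneg (gaussianPDFReal_nonneg 0 1 x)]
  calc |f x| * gaussianPDFReal 0 1 x ≤ (c * Real.exp (x^2/4)) * Real.exp (-(x^2/2)) := by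
        apply mul_le_mul (h x) (hd x) (gaussianPDFReal_nonneg 0 1 x)
        positivity
    _ = c * Real.exp (-(1/4) * x^2) := by
        rw [mul_assoc, ← Real.exp_add]
        congr 1
        ring

lemma key_mgf {α : ℝ} (hα0 : 0 < α) (hα2 : α < 2) :
    ∃ K : ℝ, 1 ≤ K ∧ ∀ s : ℝ, |s| ≤ 1 →
      Integrable
        (fun x => Real.exp (s * (|x| ^ α - ∫ t : ℝ, |t| ^ α ∂(gaussianReal 0 1))))
        (gaussianReal 0 1) ∧
      ∫ x, Real.exp (s * (|x| ^ α - ∫ t : ℝ, |t| ^ α ∂(gaussianReal 0 1)))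
          ∂(gaussianReal 0 1) ≤ Real.exp (K * s^2) := by
  obtain ⟨M, hM0, hMb⟩ := rpow_quad_bound hα0 hα2
  set γ := gaussianReal 0 1 with hγ
  set g : ℝ → ℝ := fun x => |x| ^ α with hg
  have hgmeas : Measurable g := ((Real.continuous_rpow_const hα0.le).comp continuous_abs).measurable
  have hgnn : ∀ x, 0 ≤ g x := fun x => Real.rpow_nonneg (abs_nonneg x) α
  have hgb : ∀ x : ℝ, 2 * g x ≤ x^2/4 + M := by
    intro x
    have := hMb |x| (abs_nonneg x)
    rwa [sq_abs] at this
  -- integrability of exp (2 g)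
  have int2g : Integrable (fun x => Real.exp (2 * g x)) γ := by
    apply integrable_gaussian_of_bound ((hgmeas.const_mul 2).exp)
    intro x
    rw [abs_of_nonneg (Real.exp_pos _).le]
    calc Real.exp (2 * g x) ≤ Real.exp (x^2/4 + M) := Real.exp_le_exp.mpr (hgb x)
      _ = Real.exp M * Real.exp (x^2/4) := by rw [← Real.exp_add]; ring_nf
  -- integrability of g
  have hgexp : ∀ x : ℝ, g x ≤ Real.exp (2 * g x) := by
    intro x
    have h1 : g x + 1 ≤ Real.exp (g x) := Real.add_one_le_exp (g x)
    have h2 : Real.exp (g x) ≤ Real.exp (2 * g x) :=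
      Real.exp_le_exp.mpr (by linarith [hgnn x])
    linarith
  have intg : Integrable g γ := by
    apply integrable_gaussian_of_bound hgmeas
    intro x
    rw [abs_of_nonneg (hgnn x)]
    calc g x ≤ Real.exp (2 * g x) := hgexp x
      _ ≤ Real.exp M * Real.exp (x^2/4) := by
          rw [← Real.exp_add]
          exact Real.exp_le_exp.mpr (by linarith [hgb x])
  set m : ℝ := ∫ t : ℝ, |t| ^ α ∂γ with hm
  have hmint : m = ∫ x, g x ∂γ := rfl
  have hm0 : 0 ≤ m := integral_nonneg hgnn
  -- the dominating function for X² exp|X|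
  have hdom : ∀ x : ℝ, (g x - m)^2 * Real.exp |g x - m| ≤
      (4 * Real.exp (2 * m)) * Real.exp (2 * g x) := by
    intro x
    have habs : |g x - m| ≤ g x + m := by
      rw [abs_sub_le_iff]; constructor <;> nlinarith [hgnn x, hm0]
    have h1 : (g x - m)^2 ≤ (g x + m)^2 := by nlinarith [hgnn x, hm0]
    have h2 : (g x + m)^2 ≤ 4 * Real.exp (g x + m) := sq_le_four_exp (by linarith [hgnn x])
    calc (g x - m)^2 * Real.exp |g x - m| ≤ (g x + m)^2 * Real.exp (g x + m) := by
          apply mul_le_mul h1 (Real.exp_le_exp.mpr habs) (Real.exp_pos _).le (sq_nonneg _)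
      _ ≤ 4 * Real.exp (g x + m) * Real.exp (g x + m) := by
          nlinarith [Real.exp_pos (g x + m)]
      _ = (4 * Real.exp (2 * m)) * Real.exp (2 * g x) := by
          rw [mul_assoc, ← Real.exp_add, mul_assoc, ← Real.exp_add]
          ring_nf
  have intdom : Integrable (fun x => (g x - m)^2 * Real.exp |g x - m|) γ := by
    refine Integrable.mono' (int2g.const_mul (4 * Real.exp (2 * m)))
      ((((hgmeas.sub measurable_const).pow_const 2).mul
        ((hgmeas.sub measurable_const).abs.exp)).aestronglyMeasurable)
      (ae_of_all _ fun x => ?_)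
    rw [Real.norm_eq_abs, abs_of_nonneg (by positivity)]
    exact hdom x
  set K : ℝ := max 1 (4 * Real.exp (2 * m) * ∫ x, Real.exp (2 * g x) ∂γ) with hK
  refine ⟨K, le_max_left _ _, fun s hs => ?_⟩
  have hintX : ∀ x : ℝ, Real.exp (s * (g x - m)) ≤ Real.exp (M + m) * Real.exp (x^2/4) := by
    intro x
    rw [← Real.exp_add]
    apply Real.exp_le_exp.mpr
    have h1 : s * (g x - m) ≤ |s| * |g x - m| := by
      calc s * (g x - m) ≤ |s * (g x - m)| := le_abs_self _
        _ = |s| * |g x - m| := abs_mul _ _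
    have h2 : |g x - m| ≤ g x + m := by
      rw [abs_sub_le_iff]; constructor <;> nlinarith [hgnn x, hm0]
    have h3 : |s| * |g x - m| ≤ g x + m := by
      calc |s| * |g x - m| ≤ 1 * |g x - m| :=
            mul_le_mul_of_nonneg_right hs (abs_nonneg _)
        _ = |g x - m| := one_mul _
        _ ≤ g x + m := h2
    nlinarith [hgb x]
  have intexp : Integrable (fun x => Real.exp (s * (g x - m))) γ := by
    apply integrable_gaussian_of_bound (((hgmeas.sub measurable_const).const_mul s).exp)
    intro x
    rw [abs_of_nonneg (Real.exp_pos _).le]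
    exact hintX x
  refine ⟨intexp, ?_⟩
  -- pointwise bound
  have hpt : ∀ x : ℝ, Real.exp (s * (g x - m)) ≤
      1 + s * (g x - m) + s^2 * ((g x - m)^2 * Real.exp |g x - m|) := by
    intro x
    have h0 := exp_le_aux (s * (g x - m))
    have h1 : (s * (g x - m))^2 = s^2 * (g x - m)^2 := by ring
    have h2 : Real.exp |s * (g x - m)| ≤ Real.exp |g x - m| := by
      apply Real.exp_le_exp.mpr
      rw [abs_mul]
      calc |s| * |g x - m| ≤ 1 * |g x - m| := mul_le_mul_of_nonneg_right hs (abs_nonneg _)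
        _ = |g x - m| := one_mul _
    calc Real.exp (s * (g x - m)) ≤ 1 + s * (g x - m) +
          (s * (g x - m))^2 * Real.exp |s * (g x - m)| := h0
      _ ≤ 1 + s * (g x - m) + s^2 * ((g x - m)^2 * Real.exp |g x - m|) := by
          rw [h1]
          have := mul_le_mul_of_nonneg_left h2 (mul_nonneg (sq_nonneg s) (sq_nonneg (g x - m)))
          nlinarith [this]
  have intrhs : Integrable
      (fun x => 1 + s * (g x - m) + s^2 * ((g x - m)^2 * Real.exp |g x - m|)) γ := by
    exact ((integrable_const 1).add (((intg.sub (integrable_const m)).const_mul s))).add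
      (intdom.const_mul (s^2))
  have hXzero : ∫ x, (g x - m) ∂γ = 0 := by
    rw [integral_sub intg (integrable_const m)]
    have : IsProbabilityMeasure γ := by infer_instance
    simp [hmint]
  have step1 : ∫ x, Real.exp (s * (g x - m)) ∂γ ≤
      ∫ x, (1 + s * (g x - m) + s^2 * ((g x - m)^2 * Real.exp |g x - m|)) ∂γ :=
    integral_mono intexp intrhs hpt
  have step2 : ∫ x, (1 + s * (g x - m) + s^2 * ((g x - m)^2 * Real.exp |g x - m|)) ∂γ
      ≤ 1 + K * s^2 := by
    set Q : ℝ → ℝ := fun x => (g x - m)^2 * Real.exp |g x - m| with hQ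
    have h2int : Integrable (fun x => s * (g x - m)) γ :=
      (intg.sub (integrable_const m)).const_mul s
    have h3int : Integrable (fun x => s^2 * Q x) γ := intdom.const_mul (s^2)
    have e0 : (fun x => 1 + s * (g x - m) + s^2 * Q x) =
        fun x => (1 : ℝ) + (s * (g x - m) + s^2 * Q x) := by funext x; ring
    have e1 : ∫ x, (1 + s * (g x - m) + s^2 * Q x) ∂γ
        = ∫ x, ((1:ℝ) + (s * (g x - m) + s^2 * Q x)) ∂γ := by rw [e0]
    have e2 : ∫ x, ((1:ℝ) + (s * (g x - m) + s^2 * Q x)) ∂γ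
        = (∫ _x : ℝ, (1:ℝ) ∂γ) + ∫ x, (s * (g x - m) + s^2 * Q x) ∂γ :=
      integral_add (integrable_const 1) (h2int.add h3int)
    have e3 : ∫ x, (s * (g x - m) + s^2 * Q x) ∂γ
        = s * (∫ x, (g x - m) ∂γ) + s^2 * ∫ x, Q x ∂γ := by
      rw [integral_add h2int h3int, integral_const_mul, integral_const_mul]
    have : IsProbabilityMeasure γ := by infer_instance
    have e4 : (∫ _x : ℝ, (1:ℝ) ∂γ) = 1 := by simp
    have hI : ∫ x, Q x ∂γ ≤ 4 * Real.exp (2 * m) * ∫ x, Real.exp (2 * g x) ∂γ := by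
      rw [← integral_const_mul]
      exact integral_mono intdom (int2g.const_mul _) hdom
    have hK' : 4 * Real.exp (2 * m) * ∫ x, Real.exp (2 * g x) ∂γ ≤ K := le_max_right _ _
    have hs2 : (0:ℝ) ≤ s^2 := sq_nonneg s
    rw [e1, e2, e3, e4, hXzero, mul_zero]
    nlinarith [mul_le_mul_of_nonneg_left (hI.trans hK') hs2]
  have step3 : (1 : ℝ) + K * s^2 ≤ Real.exp (K * s^2) := by
    linarith [Real.add_one_le_exp (K * s^2)]
  calc ∫ x, Real.exp (s * (g x - m)) ∂γ ≤ 1 + K * s^2 := step1.trans step2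
    _ ≤ Real.exp (K * s^2) := step3

end AuxStatement13
set_option maxHeartbeats 1000000

/-- Lemma 4.6 of the paper: concentration of `N⁻¹ Σ_j v_j^{α/2} |y_j|^α`
around its Gaussian mean, for i.i.d. standard Gaussians `y_j` and deterministic weights
`0 ≤ v_j ≤ 1/η`. -/
theorem statement_13
    (α : ℝ) (hα : α ∈ Set.Ioo (0 : ℝ) 2) :
    ∃ C : ℝ, 0 < C ∧
      ∀ N : ℕ, 0 < N → ∀ η : ℝ, 0 < η →
      ∀ (Ω : Type) [MeasureSpace Ω] [IsProbabilityMeasure (ℙ : Measure Ω)],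
      ∀ y : Fin N → Ω → ℝ,
        (∀ j, Measurable (y j)) →
        iIndepFun y ℙ →
        (∀ j, Measure.map (y j) ℙ = gaussianReal 0 1) →
      ∀ v : Fin N → ℝ, (∀ j, 0 ≤ v j ∧ v j ≤ 1 / η) →
        ℙ {ω | C * (Real.log N) ^ 4 / ((N : ℝ) ^ ((1 : ℝ) / 2) * η ^ (α / 2)) <
            |(N : ℝ)⁻¹ * ∑ j : Fin N, v j ^ (α / 2) *
              (|y j ω| ^ α - ∫ x : ℝ, |x| ^ α ∂(gaussianReal 0 1))|} <
          ENNReal.ofReal (C * Real.exp (-(Real.log N) ^ 2 / C)) := by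
  obtain ⟨hα0, hα2⟩ := hα
  obtain ⟨K, hK1, hKmgf⟩ := key_mgf hα0 hα2
  have hK0 : 0 < K := lt_of_lt_of_le one_pos hK1
  refine ⟨4 * K + 3, by linarith, ?_⟩
  intro N hN η hη Ω _ _ y hym hyind hylaw v hv
  set C : ℝ := 4 * K + 3 with hCdef
  have hC0 : 0 < C := by rw [hCdef]; linarith
  have hC7 : 7 ≤ C := by rw [hCdef]; linarith
  set γ : Measure ℝ := gaussianReal 0 1 with hγ
  set m : ℝ := ∫ x : ℝ, |x| ^ α ∂γ with hm
  set L : ℝ := Real.log N with hLdef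
  have hN1 : (1:ℝ) ≤ (N:ℝ) := by exact_mod_cast hN
  have hN0 : (0:ℝ) < (N:ℝ) := by linarith
  have hL0 : 0 ≤ L := Real.log_nonneg hN1
  have hRHS : ENNReal.ofReal (C * Real.exp (-L ^ 2 / C)) =
      ENNReal.ofReal (C * Real.exp (-(L ^ 2 / C))) := by rw [neg_div]
  by_cases hN3 : N < 3
  · -- trivial case: RHS exceeds 1
    have hN2 : (N:ℝ) ≤ 2 := by exact_mod_cast Nat.lt_succ_iff.mp hN3
    have hL1 : L ≤ 1 := by
      have := Real.log_le_sub_one_of_pos hN0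
      rw [hLdef]; linarith
    have hL2 : L ^ 2 ≤ 1 := by nlinarith
    have hexp1 : 1 - L ^ 2 / C ≤ Real.exp (-(L ^ 2 / C)) := by
      linarith [Real.add_one_le_exp (-(L ^ 2 / C))]
    have hq : L ^ 2 / C ≤ 1 := by
      rw [div_le_one hC0]; linarith
    have h1 : (1:ℝ) < C * Real.exp (-(L ^ 2 / C)) := by
      have hdiv : C * (L ^ 2 / C) = L ^ 2 := by field_simp
      have h3 := mul_le_mul_of_nonneg_left hexp1 hC0.le
      rw [mul_sub, hdiv, mul_one] at h3
      linarith
    calc ℙ {ω | C * L ^ 4 / ((N : ℝ) ^ ((1 : ℝ) / 2) * η ^ (α / 2)) <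
            |(N : ℝ)⁻¹ * ∑ j : Fin N, v j ^ (α / 2) * (|y j ω| ^ α - m)|}
        ≤ 1 := prob_le_one
      _ < ENNReal.ofReal (C * Real.exp (-L ^ 2 / C)) := by
          rw [hRHS, ← ENNReal.ofReal_one]
          exact (ENNReal.ofReal_lt_ofReal_iff (by linarith)).mpr h1
  · push_neg at hN3
    have hN3' : (3:ℝ) ≤ (N:ℝ) := by exact_mod_cast hN3
    have hL1 : 1 ≤ L := by
      rw [hLdef]
      have he : Real.exp 1 < 3 := by
        have := Real.exp_one_lt_d9; norm_num at this ⊢; linarith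
      calc (1:ℝ) = Real.log (Real.exp 1) := (Real.log_exp 1).symm
        _ ≤ Real.log N := Real.log_le_log (Real.exp_pos 1) (by linarith)
    have hL21 : 1 ≤ L ^ 2 := by nlinarith
    have hL24 : L ^ 2 ≤ L ^ 4 := by nlinarith
    have hL28 : L ^ 2 ≤ L ^ 8 := by nlinarith
    set sN : ℝ := (N:ℝ) ^ ((1:ℝ)/2) with hsN
    have hsN0 : 0 < sN := Real.rpow_pos_of_pos hN0 _
    have hsN1 : 1 ≤ sN := Real.one_le_rpow hN1 (by norm_num)
    have hsNsq : sN * sN = (N:ℝ) := by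
      rw [hsN, ← Real.rpow_add hN0]; norm_num
    set Q : ℝ := (1/η) ^ (α/2) with hQdef
    have hQ0 : 0 < Q := Real.rpow_pos_of_pos (by positivity) _
    have hηp0 : 0 < η ^ (α/2) := Real.rpow_pos_of_pos hη _
    have hηQ : η ^ (α/2) * Q = 1 := by
      rw [hQdef, ← Real.mul_rpow hη.le (by positivity), mul_one_div, div_self hη.ne',
        Real.one_rpow]
    set t₀ : ℝ := C * L ^ 4 / (sN * η ^ (α/2)) with ht₀
    have ht₀' : t₀ = C * L ^ 4 * Q / sN := by
      rw [ht₀, div_eq_div_iff (mul_pos hsN0 hηp0).ne' hsN0.ne']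
      calc C * L ^ 4 * sN = C * L ^ 4 * 1 * sN := by ring
        _ = C * L ^ 4 * (η ^ (α/2) * Q) * sN := by rw [hηQ]
        _ = C * L ^ 4 * Q * (sN * η ^ (α/2)) := by ring
    -- weights
    set c : Fin N → ℝ := fun j => v j ^ (α/2) / N with hc
    have hc0 : ∀ j, 0 ≤ c j := fun j => by
      simp only [hc]
      exact div_nonneg (Real.rpow_nonneg (hv j).1 _) hN0.le
    have hcQ : ∀ j, c j ≤ Q / N := by
      intro j
      simp only [hc, hQdef]
      have h1 : v j ^ (α/2) ≤ (1/η) ^ (α/2) :=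
        Real.rpow_le_rpow (hv j).1 (hv j).2 (by positivity)
      exact div_le_div_of_nonneg_right h1 hN0.le
    set X : Fin N → Ω → ℝ := fun j ω => c j * (|y j ω| ^ α - m) with hX
    have hgm : Measurable (fun x : ℝ => |x| ^ α) :=
      ((Real.continuous_rpow_const hα0.le).comp continuous_abs).measurable
    have hXmeas : ∀ j, Measurable (X j) := fun j =>
      (((hgm.comp (hym j)).sub measurable_const).const_mul (c j))
    have hXind : iIndepFun X ℙ := by
      have := hyind.comp (fun j (x : ℝ) => c j * (|x| ^ α - m))
        (fun j => ((hgm.sub measurable_const).const_mul (c j)))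
      exact this
    -- lambda
    set lam : ℝ := min ((N:ℝ)/Q) (C * L ^ 4 * sN / (2 * K * Q)) with hlam
    have hlam0 : 0 ≤ lam := le_min (div_nonneg hN0.le hQ0.le)
      (div_nonneg (mul_nonneg (mul_nonneg hC0.le (by positivity)) hsN0.le)
        (mul_nonneg (mul_nonneg (by norm_num) hK0.le) hQ0.le))
    have hlamA : lam ≤ (N:ℝ)/Q := min_le_left _ _
    have hucj : ∀ (u : ℝ), |u| = lam → ∀ j, |u * c j| ≤ 1 := by
      intro u hu j
      rw [abs_mul, hu, abs_of_nonneg (hc0 j)]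
      calc lam * c j ≤ ((N:ℝ)/Q) * (Q/(N:ℝ)) :=
            mul_le_mul hlamA (hcQ j) (hc0 j) (div_nonneg hN0.le hQ0.le)
        _ = 1 := by field_simp
    -- the main per-sign bound
    have hmain : ∀ u : ℝ, |u| = lam →
        Integrable (fun ω => Real.exp (u * (∑ j, X j) ω)) ℙ ∧
        mgf (∑ j, X j) ℙ u ≤ Real.exp (K * lam ^ 2 * Q ^ 2 / (N:ℝ)) := by
      intro u hu
      have hu2 : u ^ 2 = lam ^ 2 := by rw [← sq_abs u, hu]
      have hstep : ∀ j : Fin N, Integrable (fun ω => Real.exp (u * X j ω)) ℙ ∧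
          mgf (X j) ℙ u ≤ Real.exp (K * (u * c j) ^ 2) := by
        intro j
        have hs1 : |u * c j| ≤ 1 := hucj u hu j
        obtain ⟨hint, hbound⟩ := hKmgf (u * c j) hs1
        have hFmeas : Measurable (fun x : ℝ => Real.exp ((u * c j) * (|x| ^ α - m))) :=
          ((hgm.sub measurable_const).const_mul _).exp
        have heq : (fun ω => Real.exp (u * X j ω)) =
            (fun x => Real.exp ((u * c j) * (|x| ^ α - m))) ∘ (y j) := by
          funext ω
          simp only [Function.comp_apply, hX]
          congr 1
          ring
        have hI : Integrable ((fun x => Real.exp ((u * c j) * (|x| ^ α - m))) ∘ (y j)) ℙ := by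
          rw [← integrable_map_measure hFmeas.aestronglyMeasurable (hym j).aemeasurable,
            hylaw j]
          exact hint
        refine ⟨by rw [heq]; exact hI, ?_⟩
        have hmgfeq : mgf (X j) ℙ u =
            ∫ x, Real.exp ((u * c j) * (|x| ^ α - m)) ∂(Measure.map (y j) ℙ) := by
          rw [integral_map (hym j).aemeasurable hFmeas.aestronglyMeasurable]
          simp only [mgf]
          rw [heq]
          rfl
        rw [hmgfeq, hylaw j]
        exact hbound
      have hsum : ∑ j : Fin N, K * (u * c j) ^ 2 ≤ K * lam ^ 2 * Q ^ 2 / (N:ℝ) := by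
        have hterm : ∀ j : Fin N, K * (u * c j) ^ 2 ≤ K * (lam ^ 2 * (Q/(N:ℝ)) ^ 2) := by
          intro j
          have h1 : (u * c j) ^ 2 = lam ^ 2 * (c j) ^ 2 := by rw [mul_pow, hu2]
          have h2 : (c j) ^ 2 ≤ (Q/(N:ℝ)) ^ 2 := by
            apply pow_le_pow_left₀ (hc0 j) (hcQ j)
          rw [h1]
          apply mul_le_mul_of_nonneg_left _ hK0.le
          apply mul_le_mul_of_nonneg_left h2 (by positivity)
        calc ∑ j : Fin N, K * (u * c j) ^ 2 ≤
            ∑ _j : Fin N, K * (lam ^ 2 * (Q/(N:ℝ)) ^ 2) := Finset.sum_le_sum fun j _ => hterm j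
          _ = (N:ℝ) * (K * (lam ^ 2 * (Q/(N:ℝ)) ^ 2)) := by
              rw [Finset.sum_const, Finset.card_univ, Fintype.card_fin, nsmul_eq_mul]
          _ = K * lam ^ 2 * Q ^ 2 / (N:ℝ) := by field_simp
      constructor
      · exact hXind.integrable_exp_mul_sum hXmeas (fun j _ => (hstep j).1)
      · calc mgf (∑ j, X j) ℙ u = ∏ j : Fin N, mgf (X j) ℙ u :=
              hXind.mgf_sum hXmeas Finset.univ
          _ ≤ ∏ j : Fin N, Real.exp (K * (u * c j) ^ 2) :=
              Finset.prod_le_prod (fun j _ => mgf_nonneg) (fun j _ => (hstep j).2)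
          _ = Real.exp (∑ j : Fin N, K * (u * c j) ^ 2) := (Real.exp_sum _ _).symm
          _ ≤ Real.exp (K * lam ^ 2 * Q ^ 2 / (N:ℝ)) := Real.exp_le_exp.mpr hsum
    -- exponent bound
    have hQne : Q ≠ 0 := hQ0.ne'
    have hNne : (N:ℝ) ≠ 0 := hN0.ne'
    have hsNne : sN ≠ 0 := hsN0.ne'
    have hKne : K ≠ 0 := hK0.ne'
    have hCne : C ≠ 0 := hC0.ne'
    have hexp : K * lam ^ 2 * Q ^ 2 / (N:ℝ) - lam * t₀ ≤ -(L ^ 2 / C) := by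
      clear_value X c lam t₀ Q sN L m γ C
      rcases min_cases ((N:ℝ)/Q) (C * L ^ 4 * sN / (2 * K * Q)) with ⟨hmin, hcase⟩ | ⟨hmin, hcase⟩
      · -- lam = N/Q
        have hlameq : lam = (N:ℝ)/Q := by rw [hlam, hmin]
        have e1 : lam * t₀ = C * L ^ 4 * sN := by
          rw [hlameq, ht₀', ← hsNsq]
          field_simp
        have e2 : K * lam ^ 2 * Q ^ 2 / (N:ℝ) = K * (N:ℝ) := by
          rw [hlameq]
          field_simp
        have h2KN : 2 * K * (N:ℝ) ≤ C * L ^ 4 * sN := by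
          rw [div_le_div_iff₀ hQ0 (mul_pos (mul_pos (by norm_num : (0:ℝ) < 2) hK0) hQ0)] at hcase
          have h' : (2 * K * (N:ℝ)) * Q ≤ (C * L ^ 4 * sN) * Q := by linarith [hcase]
          exact le_of_mul_le_mul_right h' hQ0
        have key : L ^ 2 / C ≤ C * L ^ 4 * sN / 2 := by
          rw [div_le_div_iff₀ hC0 (by norm_num : (0:ℝ) < 2)]
          have k1 : L ^ 2 * 2 ≤ L ^ 4 * 49 := by nlinarith [hL24]
          have k2 : L ^ 4 * 49 ≤ L ^ 4 * (C * C) := by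
            have h49 : (49:ℝ) ≤ C * C := by nlinarith
            exact mul_le_mul_of_nonneg_left h49 (by positivity)
          have k3 : C * L ^ 4 * C * 1 ≤ C * L ^ 4 * C * sN :=
            mul_le_mul_of_nonneg_left hsN1
              (mul_nonneg (mul_nonneg hC0.le (by positivity : (0:ℝ) ≤ L ^ 4)) hC0.le)
          linarith [k1, k2, k3]
        rw [e1, e2]
        linarith [key, h2KN]
      · -- lam = C L^4 sN / (2 K Q)
        have hlameq : lam = C * L ^ 4 * sN / (2 * K * Q) := by rw [hlam, hmin]
        have e1 : lam * t₀ = C ^ 2 * L ^ 8 / (2 * K) := by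
          rw [hlameq, ht₀']
          field_simp
        have e2 : K * lam ^ 2 * Q ^ 2 / (N:ℝ) = C ^ 2 * L ^ 8 / (4 * K) := by
          rw [hlameq, ← hsNsq]
          field_simp
          ring
        rw [e1, e2]
        have e3 : C ^ 2 * L ^ 8 / (4 * K) - C ^ 2 * L ^ 8 / (2 * K) =
            -(C ^ 2 * L ^ 8 / (4 * K)) := by
          field_simp
          ring
        rw [e3, neg_le_neg_iff]
        rw [div_le_div_iff₀ hC0 (by linarith : (0:ℝ) < 4 * K)]
        have h4K : 4 * K ≤ C := by rw [hCdef]; linarith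
        nlinarith [mul_le_mul_of_nonneg_right hL28 (by linarith : (0:ℝ) ≤ 4 * K),
          mul_le_mul_of_nonneg_left h4K (by positivity : (0:ℝ) ≤ L ^ 8),
          mul_nonneg (by nlinarith : (0:ℝ) ≤ C ^ 2 - 1) (by positivity : (0:ℝ) ≤ L ^ 8 * C)]
    -- tails
    obtain ⟨hIntP, hMgfP⟩ := hmain lam (abs_of_nonneg hlam0)
    obtain ⟨hIntM, hMgfM⟩ := hmain (-lam) (by rw [abs_neg, abs_of_nonneg hlam0])
    set A : Set Ω := {ω | t₀ ≤ (∑ j, X j) ω} with hA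
    set B : Set Ω := {ω | (∑ j, X j) ω ≤ -t₀} with hB
    have hsub : {ω | C * L ^ 4 / (sN * η ^ (α / 2)) <
        |(N : ℝ)⁻¹ * ∑ j : Fin N, v j ^ (α / 2) * (|y j ω| ^ α - m)|} ⊆ A ∪ B := by
      intro ω hω
      simp only [Set.mem_setOf_eq] at hω
      have hSω : (N : ℝ)⁻¹ * ∑ j : Fin N, v j ^ (α / 2) * (|y j ω| ^ α - m)
          = (∑ j, X j) ω := by
        rw [Finset.sum_apply, Finset.mul_sum]
        refine Finset.sum_congr rfl fun j _ => ?_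
        simp only [hX, hc]
        ring
      rw [hSω, ← ht₀] at hω
      rcases le_or_gt 0 ((∑ j, X j) ω) with h | h
      · left
        rw [abs_of_nonneg h] at hω
        exact hω.le
      · right
        rw [abs_of_neg h] at hω
        simp only [hB, Set.mem_setOf_eq]
        linarith
    have hAbound : (ℙ A).toReal ≤ Real.exp (-(L ^ 2 / C)) := by
      calc (ℙ A).toReal ≤ Real.exp (-lam * t₀) * mgf (∑ j, X j) ℙ lam :=
            measure_ge_le_exp_mul_mgf t₀ hlam0 hIntP
        _ ≤ Real.exp (-lam * t₀) * Real.exp (K * lam ^ 2 * Q ^ 2 / (N:ℝ)) :=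
            mul_le_mul_of_nonneg_left hMgfP (Real.exp_pos _).le
        _ = Real.exp (K * lam ^ 2 * Q ^ 2 / (N:ℝ) - lam * t₀) := by
            rw [← Real.exp_add]; congr 1; ring
        _ ≤ Real.exp (-(L ^ 2 / C)) := Real.exp_le_exp.mpr hexp
    have hBbound : (ℙ B).toReal ≤ Real.exp (-(L ^ 2 / C)) := by
      calc (ℙ B).toReal ≤ Real.exp (-(-lam) * (-t₀)) * mgf (∑ j, X j) ℙ (-lam) :=
            measure_le_le_exp_mul_mgf (-t₀) (by linarith) hIntM
        _ ≤ Real.exp (-(-lam) * (-t₀)) * Real.exp (K * lam ^ 2 * Q ^ 2 / (N:ℝ)) :=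
            mul_le_mul_of_nonneg_left hMgfM (Real.exp_pos _).le
        _ = Real.exp (K * lam ^ 2 * Q ^ 2 / (N:ℝ) - lam * t₀) := by
            rw [← Real.exp_add]; congr 1; ring
        _ ≤ Real.exp (-(L ^ 2 / C)) := Real.exp_le_exp.mpr hexp
    have hfinal_real : (ℙ (A ∪ B)).toReal < C * Real.exp (-(L ^ 2 / C)) := by
      have h1 : (ℙ (A ∪ B)).toReal ≤ (ℙ A).toReal + (ℙ B).toReal := by
        calc (ℙ (A ∪ B)).toReal ≤ (ℙ A + ℙ B).toReal := by
              apply ENNReal.toReal_mono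
              · exact ENNReal.add_ne_top.mpr ⟨measure_ne_top _ _, measure_ne_top _ _⟩
              · exact measure_union_le A B
          _ = (ℙ A).toReal + (ℙ B).toReal :=
              ENNReal.toReal_add (measure_ne_top _ _) (measure_ne_top _ _)
      nlinarith [Real.exp_pos (-(L ^ 2 / C)), hAbound, hBbound, hC7]
    refine lt_of_le_of_lt (measure_mono hsub) ?_
    rw [hRHS]
    exact (ENNReal.lt_ofReal_iff_toReal_lt (measure_ne_top _ _)).mpr hfinal_real
end
end
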